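/- arXiv:1207.5155 — 4 statements merged into one kernel-verified Lean document; each statement's English description precedes it below -/
import Mathlib

section
/- For every real ε > 0 there exists a constant c ∈ ℕ such that for every (finite) tree T and every list assignment {L_v}_{v ∈ V(T)} with |L_v| ≥ c for every vertex v, there exists a coloring f of T with f(v) ∈ L_v for every vertex v that is x^{2+ε}-free, i.e., no simple path in T has a color sequence of the form x^{2+ε}. -/
/-- A finite sequence is of the form `x^r` (for a real `r ≥ 1`) if it consists of
`⌊r⌋` consecutive copies of a nonempty base `x`, followed by the prefix of `x` of
length `⌈frac(r)·|x|⌉`, where `frac(r)` is the fractional part of `r`.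
(Equivalently: ⌈r⌉ blocks, all equal to the base except the last, which is the
prescribed prefix of the base.) -/
def IsFormPow (r : ℝ) (l : List ℕ) : Prop :=
  ∃ x : List ℕ, x ≠ [] ∧
    l = (List.replicate ⌊r⌋₊ x).flatten ++ x.take ⌈Int.fract r * (x.length : ℝ)⌉₊

namespace XPowAux

open SimpleGraph

/-- `ap d p = ⌈p/d⌉`. -/
def ap (d p : ℕ) : ℕ := (p + d - 1) / d

lemma one_le_ap {d p : ℕ} (hd : 1 ≤ d) (hp : 1 ≤ p) : 1 ≤ ap d p := by
  rw [ap, Nat.le_div_iff_mul_le (by omega)]; omega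

lemma ap_le {d p : ℕ} (hd : 1 ≤ d) (hp : 1 ≤ p) : ap d p ≤ p := by
  rw [ap, Nat.div_le_iff_le_mul_add_pred (by omega)]
  have : p ≤ d * p := Nat.le_mul_of_pos_left _ (by omega)
  omega

def runPred (p : ℕ) (m : List ℕ) (k : ℕ) : Prop :=
  ∀ i < k, i + p < m.length ∧ m[i]? = m[i+p]?

instance {p : ℕ} {m : List ℕ} : DecidablePred (runPred p m) := by
  unfold runPred; infer_instance

/-- length of the maximal initial run of matches at distance `p`. -/
def run (p : ℕ) (m : List ℕ) : ℕ := Nat.findGreatest (runPred p m) m.length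

lemma runPred_zero {p : ℕ} {m : List ℕ} : runPred p m 0 := by
  intro i h; omega

lemma run_spec {p : ℕ} {m : List ℕ} : runPred p m (run p m) :=
  Nat.findGreatest_spec (Nat.zero_le _) runPred_zero

lemma le_run {p k : ℕ} {m : List ℕ} (h : runPred p m k) : k ≤ run p m := by
  rcases Nat.eq_zero_or_pos k with rfl | hk
  · omega
  · have hb := (h (k-1) (by omega)).1
    exact Nat.le_findGreatest (by omega) h

lemma run_eq_zero {p : ℕ} {m : List ℕ} (h : ¬ (p < m.length ∧ m[0]? = m[p]?)) :
    run p m = 0 := by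
  by_contra h0
  have hs := run_spec (p := p) (m := m) 0 (by omega)
  simp only [Nat.zero_add] at hs
  exact h hs

lemma run_cons_le {p a : ℕ} {m : List ℕ} : run p (a :: m) ≤ run p m + 1 := by
  rcases Nat.eq_zero_or_pos (run p (a :: m)) with h | h
  · omega
  · have hs := run_spec (p := p) (m := a :: m)
    have : runPred p m (run p (a :: m) - 1) := by
      intro i hi
      have h2 := hs (i+1) (by omega)
      have heq : i + 1 + p = (i + p) + 1 := by omega
      rw [heq] at h2
      refine ⟨by have := h2.1; simpa using this, ?_⟩
      have e1 : (a :: m)[i+1]? = m[i]? := List.getElem?_cons_succ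
      have e2 : (a :: m)[(i+p)+1]? = m[i+p]? := List.getElem?_cons_succ
      rw [← e1, ← e2]
      exact h2.2
    have := le_run this
    omega


def pot (d N : ℕ) (m : List ℕ) : ℚ :=
  ∑ p ∈ Finset.Icc 1 N, (2⁻¹ : ℚ) ^ (ap d p - min (run p m) (ap d p))

-- geometric bound
lemma geom_le_one (N : ℕ) : ∑ j ∈ Finset.Icc 1 N, (2⁻¹ : ℚ) ^ j ≤ 1 - (2⁻¹:ℚ) ^ N := by
  induction N with
  | zero => simp
  | succ n ih =>
    rw [Finset.sum_Icc_succ_top (by omega)]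
    have : (2⁻¹:ℚ) ^ (n+1) ≤ (2⁻¹:ℚ)^n := by
      apply pow_le_pow_of_le_one <;> norm_num
    calc ∑ j ∈ Finset.Icc 1 n, (2⁻¹ : ℚ) ^ j + (2⁻¹:ℚ)^(n+1)
        ≤ 1 - (2⁻¹:ℚ)^n + (2⁻¹:ℚ)^(n+1) := by linarith
      _ ≤ 1 - (2⁻¹:ℚ)^(n+1) := by
          have : (2⁻¹:ℚ)^(n+1) = (2⁻¹:ℚ) * (2⁻¹:ℚ)^n := by ring
          rw [this]; linarith [pow_nonneg (by norm_num : (0:ℚ) ≤ 2⁻¹) n]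

lemma fiber_card_le {d N j : ℕ} (hd : 1 ≤ d) :
    ((Finset.Icc 1 N).filter (fun p => ap d p = j)).card ≤ d := by
  classical
  by_cases hj : 1 ≤ j
  case neg =>
    have : (Finset.Icc 1 N).filter (fun p => ap d p = j) = ∅ := by
      apply Finset.filter_eq_empty_iff.2
      intro p hp
      simp only [Finset.mem_Icc] at hp
      have : 1 ≤ ap d p := by
        rw [ap, Nat.le_div_iff_mul_le (by omega)]; omega
      omega
    simp [this]
  case pos =>
  have e1 : (j-1)*d + d = j*d := by
    have hjj : j - 1 + 1 = j := by omega
    calc (j-1)*d + d = ((j-1)+1)*d := by ring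
      _ = j * d := by rw [hjj]
  have hsub : (Finset.Icc 1 N).filter (fun p => ap d p = j) ⊆
      Finset.Icc ((j-1)*d + 1) (j*d) := by
    intro p hp
    simp only [Finset.mem_filter, Finset.mem_Icc] at hp ⊢
    obtain ⟨⟨hp1, _⟩, hap⟩ := hp
    have h1 : j * d ≤ p + d - 1 := by
      rw [← hap, ap]; exact Nat.div_mul_le_self _ _
    have hm := Nat.div_add_mod (p+d-1) d
    rw [ap] at hap
    rw [hap] at hm
    have hmlt : (p+d-1) % d < d := Nat.mod_lt _ (by omega)
    have e0 : d * j = j * d := by ring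
    omega
  calc _ ≤ (Finset.Icc ((j-1)*d + 1) (j*d)).card := Finset.card_le_card hsub
    _ ≤ d := by rw [Nat.card_Icc]; omega

lemma potAux_le {d N : ℕ} (hd : 1 ≤ d) :
    ∑ p ∈ Finset.Icc 1 N, (2⁻¹ : ℚ) ^ (ap d p) ≤ (d : ℚ) := by
  classical
  have hmaps : ∀ p ∈ Finset.Icc 1 N, ap d p ∈ Finset.Icc 1 N := by
    intro p hp
    simp only [Finset.mem_Icc] at hp ⊢
    constructor
    · rw [ap, Nat.le_div_iff_mul_le (by omega)]; omega
    · calc ap d p ≤ p := by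
            rw [ap, Nat.div_le_iff_le_mul_add_pred (by omega)]
            have : p ≤ d * p := Nat.le_mul_of_pos_left _ (by omega)
            omega
        _ ≤ N := hp.2
  rw [← Finset.sum_fiberwise_of_maps_to hmaps (fun p => (2⁻¹ : ℚ) ^ (ap d p))]
  have hstep : ∀ j ∈ Finset.Icc 1 N,
      ∑ p ∈ (Finset.Icc 1 N).filter (fun p => ap d p = j), (2⁻¹ : ℚ) ^ (ap d p)
        ≤ (d:ℚ) * (2⁻¹:ℚ)^j := by
    intro j hj
    have : ∀ p ∈ (Finset.Icc 1 N).filter (fun p => ap d p = j),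
        (2⁻¹ : ℚ) ^ (ap d p) = (2⁻¹:ℚ)^j := by
      intro p hp
      simp only [Finset.mem_filter] at hp
      rw [hp.2]
    rw [Finset.sum_congr rfl this, Finset.sum_const, nsmul_eq_mul]
    apply mul_le_mul_of_nonneg_right
    · exact_mod_cast (fiber_card_le hd : _ ≤ d)
    · positivity
  calc _ ≤ ∑ j ∈ Finset.Icc 1 N, (d:ℚ) * (2⁻¹:ℚ)^j := Finset.sum_le_sum hstep
    _ = (d:ℚ) * ∑ j ∈ Finset.Icc 1 N, (2⁻¹:ℚ)^j := by rw [Finset.mul_sum]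
    _ ≤ (d:ℚ) * 1 := by
        apply mul_le_mul_of_nonneg_left _ (by positivity)
        have := geom_le_one N
        have : (0:ℚ) ≤ (2⁻¹:ℚ)^N := by positivity
        linarith [geom_le_one N]
    _ = d := mul_one _


lemma cons_getElem?_pos {a : ℕ} {σ : List ℕ} {p : ℕ} (hp : 1 ≤ p) :
    (a :: σ)[p]? = σ[p-1]? := by
  cases p with
  | zero => omega
  | succ q => simp

lemma sum_ite_match {A : Finset ℕ} {o : Option ℕ} {c : ℚ} (hc : 0 ≤ c) :
    ∑ a ∈ A, (if o = some a then c else 0) ≤ c := by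
  classical
  rcases o with _ | b
  · simpa using hc
  · simp only [Option.some_inj]
    calc ∑ a ∈ A, (if b = a then c else 0) = if b ∈ A then c else 0 := Finset.sum_ite_eq A b _
      _ ≤ c := by split <;> simp [hc]

lemma pot_nonneg {d N : ℕ} {m : List ℕ} : 0 ≤ pot d N m := by
  apply Finset.sum_nonneg; intro p _; positivity

/-- The crucial greedy choice lemma. -/
lemma choice {d N : ℕ} (hd : 1 ≤ d) (σ : List ℕ) (hlen : σ.length < N)
    (hpot : pot d N σ ≤ 2 * d) (S : Finset ℕ) (hS : 4 * d + 4 ≤ S.card) :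
    ∃ a ∈ S, pot d N (a :: σ) ≤ 2 * d ∧ ∀ p, 1 ≤ p → run p (a :: σ) < ap d p := by
  classical
  set Dang : Finset ℕ := (Finset.Icc 1 N).filter (fun p => ap d p ≤ run p σ + 1) with hDang
  -- each dangerous p contributes at least 1/2 to the potential
  have hDcard : (Dang.card : ℚ) * 2⁻¹ ≤ pot d N σ := by
    have : ∀ p ∈ Dang, (2⁻¹:ℚ) ≤ (2⁻¹ : ℚ) ^ (ap d p - min (run p σ) (ap d p)) := by
      intro p hp
      simp only [hDang, Finset.mem_filter, Finset.mem_Icc] at hp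
      have hexp : ap d p - min (run p σ) (ap d p) ≤ 1 := by omega
      calc (2⁻¹:ℚ) = 2⁻¹ ^ (1:ℕ) := by norm_num
        _ ≤ (2⁻¹:ℚ) ^ (ap d p - min (run p σ) (ap d p)) := by
            apply pow_le_pow_of_le_one (by norm_num) (by norm_num) hexp
    calc (Dang.card : ℚ) * 2⁻¹ = ∑ _p ∈ Dang, (2⁻¹:ℚ) := by
          rw [Finset.sum_const, nsmul_eq_mul]
      _ ≤ ∑ p ∈ Dang, (2⁻¹ : ℚ) ^ (ap d p - min (run p σ) (ap d p)) :=
          Finset.sum_le_sum this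
      _ ≤ pot d N σ := by
          apply Finset.sum_le_sum_of_subset_of_nonneg (Finset.filter_subset _ _)
          intro p _ _; positivity
  have hDcard' : Dang.card ≤ 4 * d := by
    have h2 : (Dang.card : ℚ) ≤ 4 * d := by
      nlinarith [hDcard, hpot]
    exact_mod_cast h2
  set F : Finset ℕ := Dang.image (fun p => σ.getD (p-1) 0) with hF
  set A : Finset ℕ := S \ F with hA
  have hAcard : 4 ≤ A.card := by
    have h1 : F.card ≤ 4 * d := le_trans (Finset.card_image_le) hDcard'
    have h2 := Finset.le_card_sdiff F S
    have h3 : A.card = (S \ F).card := by rw [hA]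
    omega
  -- all elements of A give a "good" extension
  have hgood : ∀ a ∈ A, ∀ p, 1 ≤ p → run p (a :: σ) < ap d p := by
    intro a ha p hp
    by_cases hm : p < (a :: σ).length ∧ (a :: σ)[0]? = (a :: σ)[p]?
    · -- matched head
      have hple : p ≤ σ.length := Nat.lt_succ_iff.mp (by simpa using hm.1)
      have hpN : p ∈ Finset.Icc 1 N := by
        simp only [Finset.mem_Icc]; omega
      have hget : σ[p-1]? = some a := by
        have h0 : (a :: σ)[0]? = some a := List.getElem?_cons_zero
        have h1 : (a :: σ)[p]? = σ[p-1]? := cons_getElem?_pos hp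
        rw [h0, h1] at hm
        exact hm.2.symm
      have hpnotD : p ∉ Dang := by
        intro hpD
        have : σ.getD (p-1) 0 = a := by
          rw [List.getD_eq_getElem?_getD, hget]; rfl
        have : a ∈ F := Finset.mem_image.2 ⟨p, hpD, this⟩
        rw [hA] at ha
        exact (Finset.mem_sdiff.1 ha).2 this
      have : ¬ (ap d p ≤ run p σ + 1) := by
        intro hc
        exact hpnotD (Finset.mem_filter.2 ⟨hpN, hc⟩)
      have := run_cons_le (p := p) (a := a) (m := σ)
      omega
    · -- unmatched head: run = 0
      have := run_eq_zero (p := p) (m := a :: σ) hm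
      have := one_le_ap hd hp
      omega
  -- average potential bound
  have hsum : ∑ a ∈ A, pot d N (a :: σ) ≤ 2 * pot d N σ + (A.card : ℚ) * d := by
    unfold pot
    rw [Finset.sum_comm]
    have hper : ∀ p ∈ Finset.Icc 1 N,
        ∑ a ∈ A, (2⁻¹ : ℚ) ^ (ap d p - min (run p (a :: σ)) (ap d p))
          ≤ 2 * (2⁻¹ : ℚ) ^ (ap d p - min (run p σ) (ap d p)) + (A.card : ℚ) * (2⁻¹:ℚ) ^ (ap d p) := by
      intro p hp
      simp only [Finset.mem_Icc] at hp
      have hptw : ∀ a ∈ A, (2⁻¹ : ℚ) ^ (ap d p - min (run p (a :: σ)) (ap d p))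
          ≤ (2⁻¹:ℚ) ^ (ap d p) +
            (if σ[p-1]? = some a then 2 * (2⁻¹ : ℚ) ^ (ap d p - min (run p σ) (ap d p)) else 0) := by
        intro a _
        by_cases hm : p < (a :: σ).length ∧ (a :: σ)[0]? = (a :: σ)[p]?
        · have hget : σ[p-1]? = some a := by
            have h0 : (a :: σ)[0]? = some a := List.getElem?_cons_zero
            have h1 : (a :: σ)[p]? = σ[p-1]? := cons_getElem?_pos hp.1
            rw [h0, h1] at hm
            exact hm.2.symm
          rw [if_pos hget]
          have hrle := run_cons_le (p := p) (a := a) (m := σ)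
          have hexp : ap d p - min (run p σ) (ap d p) ≤ (ap d p - min (run p (a :: σ)) (ap d p)) + 1 := by
            omega
          have : (2⁻¹ : ℚ) ^ (ap d p - min (run p (a :: σ)) (ap d p))
              ≤ 2 * (2⁻¹ : ℚ) ^ (ap d p - min (run p σ) (ap d p)) := by
            calc (2⁻¹ : ℚ) ^ (ap d p - min (run p (a :: σ)) (ap d p))
                = 2 * (2⁻¹ : ℚ) ^ ((ap d p - min (run p (a :: σ)) (ap d p)) + 1) := by
                  rw [pow_succ]; ring
              _ ≤ 2 * (2⁻¹ : ℚ) ^ (ap d p - min (run p σ) (ap d p)) := by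
                  apply mul_le_mul_of_nonneg_left _ (by norm_num)
                  apply pow_le_pow_of_le_one (by norm_num) (by norm_num) hexp
          have hpos : (0:ℚ) ≤ (2⁻¹:ℚ) ^ (ap d p) := by positivity
          linarith
        · have hz := run_eq_zero (p := p) (m := a :: σ) hm
          rw [hz]
          simp only [Nat.min_zero, Nat.zero_min, min_zero, Nat.sub_zero]
          have : (0:ℚ) ≤ (if σ[p-1]? = some a then 2 * (2⁻¹ : ℚ) ^ (ap d p - min (run p σ) (ap d p)) else 0) := by
            split <;> positivity
          linarith
      calc ∑ a ∈ A, (2⁻¹ : ℚ) ^ (ap d p - min (run p (a :: σ)) (ap d p))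
          ≤ ∑ a ∈ A, ((2⁻¹:ℚ) ^ (ap d p) +
            (if σ[p-1]? = some a then 2 * (2⁻¹ : ℚ) ^ (ap d p - min (run p σ) (ap d p)) else 0)) :=
            Finset.sum_le_sum hptw
        _ = (A.card : ℚ) * (2⁻¹:ℚ) ^ (ap d p) +
            ∑ a ∈ A, (if σ[p-1]? = some a then 2 * (2⁻¹ : ℚ) ^ (ap d p - min (run p σ) (ap d p)) else 0) := by
            rw [Finset.sum_add_distrib, Finset.sum_const, nsmul_eq_mul]
        _ ≤ (A.card : ℚ) * (2⁻¹:ℚ) ^ (ap d p) + 2 * (2⁻¹ : ℚ) ^ (ap d p - min (run p σ) (ap d p)) := by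
            have : ∑ a ∈ A, (if σ[p-1]? = some a then 2 * (2⁻¹ : ℚ) ^ (ap d p - min (run p σ) (ap d p)) else 0)
                ≤ 2 * (2⁻¹ : ℚ) ^ (ap d p - min (run p σ) (ap d p)) := by
              exact sum_ite_match (by positivity)
            linarith
        _ = 2 * (2⁻¹ : ℚ) ^ (ap d p - min (run p σ) (ap d p)) + (A.card : ℚ) * (2⁻¹:ℚ) ^ (ap d p) := by ring
    calc ∑ p ∈ Finset.Icc 1 N, ∑ a ∈ A, (2⁻¹ : ℚ) ^ (ap d p - min (run p (a :: σ)) (ap d p))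
        ≤ ∑ p ∈ Finset.Icc 1 N, (2 * (2⁻¹ : ℚ) ^ (ap d p - min (run p σ) (ap d p)) + (A.card : ℚ) * (2⁻¹:ℚ) ^ (ap d p)) :=
          Finset.sum_le_sum hper
      _ = 2 * pot d N σ + (A.card:ℚ) * ∑ p ∈ Finset.Icc 1 N, (2⁻¹:ℚ) ^ (ap d p) := by
          rw [Finset.sum_add_distrib, ← Finset.mul_sum, ← Finset.mul_sum]; rfl
      _ ≤ 2 * pot d N σ + (A.card : ℚ) * d := by
          have h1 := potAux_le (N := N) hd
          have h2 : (0:ℚ) ≤ (A.card : ℚ) := by positivity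
          nlinarith
  -- extract a good element
  by_contra hcon
  push_neg at hcon
  have hlt : ∀ a ∈ A, 2 * (d:ℚ) < pot d N (a :: σ) := by
    intro a ha
    have haS : a ∈ S := (Finset.mem_sdiff.1 ha).1
    rcases lt_or_ge (2*(d:ℚ)) (pot d N (a :: σ)) with h | h
    · exact h
    · obtain ⟨p, hp1, hp2⟩ := hcon a haS h
      exact absurd (hgood a ha p hp1) (by omega)
  have : (A.card : ℚ) * (2 * d) < ∑ a ∈ A, pot d N (a :: σ) := by
    have hne : A.Nonempty := Finset.card_pos.1 (by omega)
    calc (A.card : ℚ) * (2*d) = ∑ _a ∈ A, 2*(d:ℚ) := by rw [Finset.sum_const, nsmul_eq_mul]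
      _ < ∑ a ∈ A, pot d N (a :: σ) := Finset.sum_lt_sum_of_nonempty hne hlt
  have hA4 : (4:ℚ) ≤ (A.card : ℚ) := by exact_mod_cast hAcard
  have hd1 : (1:ℚ) ≤ (d:ℚ) := by exact_mod_cast hd
  nlinarith [hsum, hpot, this]


lemma getD_irrel {α : Type*} {l : List α} {i : ℕ} (h : i < l.length) (a b : α) :
    l.getD i a = l.getD i b := by
  rw [List.getD_eq_getElem l a h, List.getD_eq_getElem l b h]

lemma tree_setup {V : Type} [Fintype V] {G : SimpleGraph V} (hT : G.IsTree) :
    ∃ (dep : V → ℕ) (par : V → V),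
      (∀ x y, G.Adj x y → (par y = x ∧ dep y = dep x + 1) ∨ (par x = y ∧ dep x = dep y + 1)) ∧
      (∀ v, 0 < dep v → dep (par v) + 1 = dep v) ∧
      (∀ v, dep v < Fintype.card V) := by
  classical
  obtain ⟨r⟩ : Nonempty V := hT.isConnected.nonempty
  have huniq := hT.existsUnique_path r
  set P : (v : V) → G.Walk r v := fun v => (huniq v).choose with hPdef
  have hP : ∀ v, (P v).IsPath := fun v => (huniq v).choose_spec.1
  have hPu : ∀ v (q : G.Walk r v), q.IsPath → q = P v := fun v q hq =>
    (huniq v).choose_spec.2 q hq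
  have pathUnique := isAcyclic_iff_path_unique.1 hT.IsAcyclic
  refine ⟨fun v => (P v).length, fun v => (P v).getVert ((P v).length - 1), ?_, ?_, ?_⟩
  · -- adjacency dichotomy
    intro x y hxy
    by_cases hy : y ∈ (P x).support
    · right
      have hq1 := (hP x).takeUntil hy
      have hq2 := (hP x).dropUntil hy
      have hspec := ((P x).take_spec hy)
      have hedge : (Walk.cons hxy.symm Walk.nil : G.Walk y x).IsPath := by
        apply Walk.IsPath.cons Walk.IsPath.nil
        simp [hxy.ne']
      have hq2e : (P x).dropUntil y hy = Walk.cons hxy.symm Walk.nil := by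
        have := pathUnique ⟨(P x).dropUntil y hy, hq2⟩ ⟨Walk.cons hxy.symm Walk.nil, hedge⟩
        exact congrArg Subtype.val this
      have hq1P : (P x).takeUntil y hy = P y := hPu y _ hq1
      have hPx : P x = (P y).concat hxy.symm := by
        rw [← hspec, hq2e, hq1P, Walk.concat_eq_append]
      constructor
      · show (P x).getVert ((P x).length - 1) = y
        rw [hPx]
        have hlen : ((P y).concat hxy.symm).length = (P y).length + 1 :=
          Walk.length_concat _ _
        rw [hlen, Nat.add_sub_cancel, Walk.concat_eq_append, Walk.getVert_append]
        simp
      · show (P x).length = (P y).length + 1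
        rw [hPx, Walk.length_concat]
    · left
      have hQP : ((P x).concat hxy).IsPath := by
        rw [← Walk.isPath_reverse_iff, Walk.reverse_concat]
        apply Walk.IsPath.cons
        · rw [Walk.isPath_reverse_iff]; exact hP x
        · rw [Walk.support_reverse, List.mem_reverse]; exact hy
      have hPy : P y = (P x).concat hxy := (hPu y _ hQP).symm
      constructor
      · show (P y).getVert ((P y).length - 1) = x
        rw [hPy]
        have hlen : ((P x).concat hxy).length = (P x).length + 1 :=
          Walk.length_concat _ _
        rw [hlen, Nat.add_sub_cancel, Walk.concat_eq_append, Walk.getVert_append]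
        simp
      · show (P y).length = (P x).length + 1
        rw [hPy, Walk.length_concat]
  · -- parent depth
    intro v hv
    have hv' : 0 < (P v).length := hv
    clear hv
    set R := (P v).reverse with hR
    have hRnil : ¬ R.Nil := by
      rw [Walk.not_nil_iff_lt_length, hR, Walk.length_reverse]
      exact hv'
    have hRpath : R.IsPath := by rw [hR, Walk.isPath_reverse_iff]; exact hP v
    have hRtail : R.tail.IsPath := by
      have hcons := R.cons_tail_eq hRnil
      have : (Walk.cons (R.adj_snd hRnil) R.tail).IsPath := by
        rw [hcons]; exact hRpath
      exact ((Walk.cons_isPath_iff _ _).1 this).1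
    have hvert : R.getVert 1 = (P v).getVert ((P v).length - 1) := by
      rw [hR, Walk.getVert_reverse]
    have hqP : (R.tail.reverse.copy rfl hvert).IsPath := by
      rw [Walk.isPath_copy, Walk.isPath_reverse_iff]; exact hRtail
    have := hPu _ _ hqP
    have hlen : (R.tail.reverse.copy rfl hvert).length = (P v).length - 1 := by
      rw [Walk.length_copy, Walk.length_reverse]
      have := Walk.length_tail_add_one hRnil
      rw [hR] at this ⊢
      rw [Walk.length_reverse] at this
      omega
    show (P ((P v).getVert ((P v).length - 1))).length + 1 = (P v).length
    rw [← this, hlen]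
    omega
  · -- depth bound
    intro v
    exact (hP v).length_lt


lemma peak {V : Type} {G : SimpleGraph V} (dep : V → ℕ) (par : V → V)
    (hadj : ∀ x y, G.Adj x y → (par y = x ∧ dep y = dep x + 1) ∨ (par x = y ∧ dep x = dep y + 1))
    {u w : V} (p : G.Walk u w) (hp : p.IsPath) :
    ∃ t ≤ p.length,
      (∀ i < t, par (p.support.getD i u) = p.support.getD (i+1) u ∧
          dep (p.support.getD i u) = dep (p.support.getD (i+1) u) + 1) ∧
      (∀ i, t ≤ i → i < p.length → par (p.support.getD (i+1) u) = p.support.getD i u ∧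
          dep (p.support.getD (i+1) u) = dep (p.support.getD i u) + 1) := by
  induction p with
  | nil =>
    refine ⟨0, le_refl 0, ?_, ?_⟩
    · intro i hi; omega
    · intro i _ hi; simp only [Walk.length_nil] at hi; omega
  | @cons a b c h q ih =>
    obtain ⟨hq, hnotmem⟩ := (Walk.cons_isPath_iff h q).1 hp
    obtain ⟨t', ht', asc', desc'⟩ := ih hq
    have hlen : q.support.length = q.length + 1 := q.length_support
    have hq0 : ∀ z : V, q.support.getD 0 z = b := by
      intro z; rw [q.support_eq_cons]; rfl
    have hconv : ∀ (i : ℕ) (z z' : V), i ≤ q.length → q.support.getD i z = q.support.getD i z' :=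
      fun i z z' hi => getD_irrel (by omega) z z'
    have hsup : (Walk.cons h q).support = a :: q.support := Walk.support_cons h q
    have hlc : (Walk.cons h q).length = q.length + 1 := Walk.length_cons h q
    have hgetD : ∀ (i : ℕ) (z : V), (Walk.cons h q).support.getD (i+1) z = q.support.getD i z := by
      intro i z; rw [hsup]; rfl
    have hgetD0 : ∀ z : V, (Walk.cons h q).support.getD 0 z = a := by
      intro z; rw [hsup]; rfl
    rcases hadj a b h with ⟨hpb, hdb⟩ | ⟨hpa, hda⟩
    · -- descending from the start : t = 0
      have ht'0 : t' = 0 := by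
        by_contra h0
        have h1 := asc' 0 (by omega)
        rw [hq0 b] at h1
        have hmem : q.support.getD 1 b ∈ q.support := by
          have h1lt : 1 < q.support.length := by omega
          rw [List.getD_eq_getElem _ _ h1lt]
          exact List.getElem_mem _
        rw [← h1.1, hpb] at hmem
        exact hnotmem hmem
      refine ⟨0, by omega, by omega, ?_⟩
      intro i _ hilen
      rw [hlc] at hilen
      cases i with
      | zero =>
        rw [hgetD 0 a, hgetD0 a, hq0 a]
        exact ⟨hpb, hdb⟩
      | succ j =>
        have hd := desc' j (by omega) (by omega)
        rw [hgetD (j+1) a, hgetD j a, hconv (j+1) a b (by omega), hconv j a b (by omega)]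
        exact hd
    · -- ascending start : t = t' + 1
      refine ⟨t' + 1, by omega, ?_, ?_⟩
      · intro i hi
        cases i with
        | zero =>
          rw [hgetD 0 a, hgetD0 a, hq0 a]
          exact ⟨hpa, hda⟩
        | succ j =>
          have ha := asc' j (by omega)
          rw [hgetD (j+1) a, hgetD j a, hconv (j+1) a b (by omega), hconv j a b (by omega)]
          exact ha
      · intro i hti hilen
        rw [hlc] at hilen
        cases i with
        | zero => omega
        | succ j =>
          have hd := desc' j (by omega) (by omega)
          rw [hgetD (j+1) a, hgetD j a, hconv (j+1) a b (by omega), hconv j a b (by omega)]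
          exact hd


/-- The greedy chain construction down the tree. -/
noncomputable def chainF {V : Type} (dep : V → ℕ) (par : V → V)
    (hpar : ∀ v, 0 < dep v → dep (par v) < dep v) (pick : List ℕ → V → ℕ) (v : V) :
    List ℕ :=
  if h : dep v = 0 then [pick [] v]
  else pick (chainF dep par hpar pick (par v)) v :: chainF dep par hpar pick (par v)
termination_by dep v
decreasing_by all_goals exact hpar v (by omega)

lemma flatten_replicate_get {x : List ℕ} {k j : ℕ} (h : j < k * x.length) :
    ((List.replicate k x).flatten)[j]? = x[j % x.length]? := by
  induction k generalizing j with
  | zero => omega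
  | succ kk ih =>
    have hx : 0 < x.length := by
      rcases Nat.eq_zero_or_pos x.length with h0 | h0
      · rw [h0, Nat.mul_zero] at h; omega
      · exact h0
    rw [List.replicate_succ, List.flatten_cons]
    by_cases hj : j < x.length
    · rw [List.getElem?_append_left hj, Nat.mod_eq_of_lt hj]
    · push_neg at hj
      rw [List.getElem?_append_right hj]
      have h2 : j - x.length < kk * x.length := by
        have : (kk+1) * x.length = kk * x.length + x.length := by ring
        omega
      rw [ih h2]
      congr 1
      rw [← Nat.mod_eq_sub_mod hj]

lemma pow_periodic {x : List ℕ} {l : List ℕ} {k s : ℕ} (hs : s ≤ x.length)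
    (hl : l = (List.replicate k x).flatten ++ x.take s) :
    ∀ j, j < k * x.length + s → l[j]? = x[j % x.length]? := by
  intro j hj
  have hflatlen : ((List.replicate k x).flatten).length = k * x.length := by
    simp [List.length_flatten, List.map_replicate, List.sum_replicate, smul_eq_mul]
  by_cases hcase : j < k * x.length
  · have hlt' : j < ((List.replicate k x).flatten).length := by rw [hflatlen]; omega
    rw [hl, List.getElem?_append_left hlt', flatten_replicate_get hcase]
  · push_neg at hcase
    have hx : 0 < x.length := by omega
    rw [hl, List.getElem?_append_right (by rw [hflatlen]; omega), hflatlen]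
    have hlt : j - k * x.length < s := by omega
    rw [List.getElem?_take, if_pos hlt]
    have hmod : j % x.length = j - k * x.length := by
      conv_lhs => rw [show j = (j - k*x.length) + k * x.length by omega]
      rw [Nat.add_mul_mod_self_right, Nat.mod_eq_of_lt (by omega)]
    rw [hmod]


end XPowAux

open XPowAux in
/-- For every `ε > 0` there is a constant `c` such that every finite tree admits,
for any lists of size at least `c`, a coloring chosen from the lists in which no
simple path has a color sequence of the form `x^{2+ε}`. -/
theorem x_two_plus_eps_free_choice_trees :
    ∀ ε : ℝ, 0 < ε → ∃ c : ℕ,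
      ∀ (V : Type) [Fintype V] (G : SimpleGraph V),
        G.IsTree →
        ∀ L : V → Finset ℕ, (∀ v : V, c ≤ (L v).card) →
        ∃ f : V → ℕ, (∀ v : V, f v ∈ L v) ∧
          ∀ (u w : V) (p : G.Walk u w), p.IsPath →
            ¬ IsFormPow (2 + ε) (p.support.map f) := by
  intro ε hε
  classical
  set d : ℕ := max 1 ⌈2/ε⌉₊ with hd_def
  have hd : 1 ≤ d := le_max_left _ _
  have hdε : 2 / ε ≤ (d : ℝ) := by
    calc 2/ε ≤ (⌈2/ε⌉₊ : ℝ) := Nat.le_ceil _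
      _ ≤ (d : ℝ) := by exact_mod_cast le_max_right 1 ⌈2/ε⌉₊
  refine ⟨4*d+4, ?_⟩
  intro V _ G hT L hL
  obtain ⟨dep, par, hadj, hpar, hdepN⟩ := tree_setup hT
  set N : ℕ := Fintype.card V with hN
  have hNe : Nonempty V := hT.isConnected.nonempty
  have hN1 : 1 ≤ N := Fintype.card_pos
  -- the pick function
  have hpick : ∀ (σ : List ℕ) (v : V), ∃ a : ℕ,
      σ.length < N → pot d N σ ≤ 2*d →
      (a ∈ L v ∧ pot d N (a::σ) ≤ 2*d ∧ ∀ p, 1 ≤ p → run p (a::σ) < ap d p) := by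
    intro σ v
    by_cases hc : σ.length < N ∧ pot d N σ ≤ 2*d
    · obtain ⟨a, ha, h1, h2⟩ := choice hd σ hc.1 hc.2 (L v) (hL v)
      exact ⟨a, fun _ _ => ⟨ha, h1, h2⟩⟩
    · exact ⟨0, fun h1 h2 => absurd ⟨h1, h2⟩ hc⟩
  set pick : List ℕ → V → ℕ := fun σ v => (hpick σ v).choose with hpickdef
  have hpickspec : ∀ σ v, σ.length < N → pot d N σ ≤ 2*d →
      (pick σ v ∈ L v ∧ pot d N (pick σ v :: σ) ≤ 2*d ∧
        ∀ p, 1 ≤ p → run p (pick σ v :: σ) < ap d p) :=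
    fun σ v h1 h2 => (hpick σ v).choose_spec h1 h2
  have hpar' : ∀ v, 0 < dep v → dep (par v) < dep v := by
    intro v hv; have := hpar v hv; omega
  set ch : V → List ℕ := chainF dep par hpar' pick with hch
  set f : V → ℕ := fun v => (ch v).headI with hf
  -- potential of the empty chain
  have hpotnil : pot d N ([] : List ℕ) ≤ 2*d := by
    have heq : pot d N ([] : List ℕ) = ∑ p ∈ Finset.Icc 1 N, (2⁻¹ : ℚ) ^ (ap d p) := by
      apply Finset.sum_congr rfl
      intro p _
      rw [run_eq_zero (by simp), Nat.min_comm, Nat.min_zero, Nat.sub_zero]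
    rw [heq]
    calc ∑ p ∈ Finset.Icc 1 N, (2⁻¹ : ℚ) ^ (ap d p) ≤ (d:ℚ) := potAux_le hd
      _ ≤ 2*d := by
          have h1 : (1:ℚ) ≤ (d:ℚ) := by exact_mod_cast hd
          push_cast
          nlinarith
  -- unfolding equations for ch
  have hch0 : ∀ v, dep v = 0 → ch v = [pick [] v] := by
    intro v h0
    rw [hch]
    rw [chainF]
    simp [h0]
  have hchS : ∀ v, dep v ≠ 0 → ch v = pick (ch (par v)) v :: ch (par v) := by
    intro v h0
    rw [hch]
    conv_lhs => rw [chainF]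
    simp [h0]
  -- invariant
  have hinv : ∀ k (v : V), dep v = k → (ch v).length = dep v + 1 ∧ pot d N (ch v) ≤ 2*d ∧
      (∀ p, 1 ≤ p → run p (ch v) < ap d p) ∧ (ch v).headI ∈ L v := by
    intro k
    induction k using Nat.strong_induction_on with
    | _ k ih =>
      intro v hk
      by_cases h0 : dep v = 0
      · have hcv := hch0 v h0
        have hs := hpickspec [] v (by simp; omega) hpotnil
        refine ⟨by rw [hcv, h0]; rfl, ?_, ?_, ?_⟩
        · rw [hcv]; exact hs.2.1
        · rw [hcv]; exact hs.2.2
        · rw [hcv]; exact hs.1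
      · have hcv := hchS v h0
        have hdparlt : dep (par v) < k := by rw [← hk]; exact hpar' v (by omega)
        have hrec := ih (dep (par v)) hdparlt (par v) rfl
        have hlenσ : (ch (par v)).length < N := by
          have h1 := hdepN v
          have h2 := hpar v (by omega)
          rw [hrec.1]; omega
        have hs := hpickspec (ch (par v)) v hlenσ hrec.2.1
        refine ⟨?_, by rw [hcv]; exact hs.2.1, by rw [hcv]; exact hs.2.2,
          by rw [hcv]; exact hs.1⟩
        · rw [hcv]
          simp only [List.length_cons, hrec.1]
          have := hpar v (by omega)
          omega
  -- chain entries are colors of iterated parents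
  have hget : ∀ k (v : V), dep v = k → ∀ j, j ≤ dep v → (ch v)[j]? = some (f (par^[j] v)) := by
    intro k
    induction k using Nat.strong_induction_on with
    | _ k ih =>
      intro v hk j hj
      by_cases h0 : dep v = 0
      · have hj0 : j = 0 := by omega
        subst hj0
        rw [hch0 v h0]
        simp [hf]
        rw [hch0 v h0]
        rfl
      · have hcv := hchS v h0
        cases j with
        | zero =>
          rw [hcv]
          simp only [Function.iterate_zero, id_eq, List.getElem?_cons_zero, hf]
          rw [hcv]
          rfl
        | succ jj =>
          have hdparlt : dep (par v) < k := by rw [← hk]; exact hpar' v (by omega)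
          have hjj : jj ≤ dep (par v) := by
            have := hpar v (by omega); omega
          rw [hcv, List.getElem?_cons_succ, ih (dep (par v)) hdparlt (par v) rfl jj hjj,
            Function.iterate_succ_apply]
  have hmem : ∀ v, f v ∈ L v := by
    intro v
    exact (hinv (dep v) v rfl).2.2.2
  refine ⟨f, hmem, ?_⟩
  rintro u w p hp ⟨x, hxne, hl⟩
  set n := x.length with hn
  have hn1 : 1 ≤ n := List.length_pos_iff.2 hxne
  set kk := ⌊(2:ℝ)+ε⌋₊ with hkk
  set s := ⌈Int.fract ((2:ℝ)+ε) * (n:ℝ)⌉₊ with hs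
  have hk2 : 2 ≤ kk := Nat.le_floor (by push_cast; linarith)
  have hfr0 : (0:ℝ) ≤ Int.fract ((2:ℝ)+ε) := Int.fract_nonneg _
  have hfr1 : Int.fract ((2:ℝ)+ε) < 1 := Int.fract_lt_one _
  have hsn : s ≤ n := by
    rw [hs, Nat.ceil_le]
    calc Int.fract ((2:ℝ)+ε) * n ≤ 1 * n := by
          apply mul_le_mul_of_nonneg_right (le_of_lt hfr1) (by positivity)
      _ = (n:ℝ) := one_mul _
  -- length of the color word
  have hmaplen : (p.support.map f).length = p.length + 1 := by
    rw [List.length_map, SimpleGraph.Walk.length_support]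
  have hLlen : p.length + 1 = kk * n + s := by
    rw [← hmaplen, hl]
    simp only [List.length_append, List.length_take]
    have h1 : ((List.replicate kk x).flatten).length = kk * n := by
      simp [List.length_flatten, List.map_replicate, List.sum_replicate, smul_eq_mul, hn]
    rw [h1]
    omega
  -- periodicity
  have hprod : kk * x.length = kk * n := by rw [hn]
  have hperx := pow_periodic hsn hl
  have hper : ∀ i, i + n < kk * n + s →
      (p.support.map f)[i]? = (p.support.map f)[i+n]? := by
    intro i hi
    rw [hperx i (by omega), hperx (i+n) (by omega), Nat.add_mod_right]
  -- the real-number length bound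
  have hkfr : (kk:ℝ) + Int.fract ((2:ℝ)+ε) = 2 + ε := by
    rw [hkk, natCast_floor_eq_intCast_floor (by linarith)]
    exact Int.floor_add_fract _
  have hsfr : Int.fract ((2:ℝ)+ε) * n ≤ (s:ℝ) := Nat.le_ceil _
  have hreal : ((2:ℝ)+ε) * n ≤ ((kk * n + s : ℕ) : ℝ) := by
    have hkfrn : ((kk:ℝ) + Int.fract ((2:ℝ)+ε)) * n = ((2:ℝ)+ε) * n := by rw [hkfr]
    push_cast
    nlinarith [hsfr, hkfrn]
  set krun := ap d n with hkrun
  have hkrunR : (krun:ℝ) ≤ ε/2 * n + 1 := by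
    have hd0 : (0:ℝ) < (d:ℝ) := by exact_mod_cast hd
    have h1 : (krun:ℝ) ≤ ((n + d - 1 : ℕ):ℝ) / (d:ℝ) := by
      rw [hkrun, ap]; exact Nat.cast_div_le
    have h2 : ((n + d - 1 : ℕ):ℝ) = (n:ℝ) + (d:ℝ) - 1 := by
      rw [Nat.cast_sub (by omega)]; push_cast; ring
    have h3 : ((n:ℝ) + (d:ℝ) - 1) / (d:ℝ) ≤ (n:ℝ)/(d:ℝ) + 1 := by
      rw [div_le_iff₀ hd0]
      have : ((n:ℝ)/(d:ℝ)) * d = (n:ℝ) := div_mul_cancel₀ _ (ne_of_gt hd0)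
      nlinarith
    have h2d : 2 ≤ ε * d := by
      rw [div_le_iff₀ hε] at hdε
      linarith
    have h4 : (n:ℝ)/(d:ℝ) ≤ ε/2 * n := by
      rw [div_le_iff₀ hd0]
      have hn0 : (0:ℝ) ≤ (n:ℝ) := by positivity
      nlinarith
    calc (krun:ℝ) ≤ ((n + d - 1 : ℕ):ℝ) / (d:ℝ) := h1
      _ = ((n:ℝ) + (d:ℝ) - 1) / (d:ℝ) := by rw [h2]
      _ ≤ (n:ℝ)/(d:ℝ) + 1 := h3
      _ ≤ ε/2 * n + 1 := by linarith
  have h2krun : 2*krun + 2*n ≤ (kk * n + s) + 2 := by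
    have hR : (2*krun + 2*n : ℝ) ≤ ((kk * n + s : ℕ):ℝ) + 2 := by
      have : (2:ℝ)*krun ≤ ε * n + 2 := by linarith
      have h5 : ((2:ℝ)+ε) * n = 2*n + ε*n := by ring
      push_cast at hreal ⊢
      nlinarith
    exact_mod_cast hR
  -- the peak decomposition of the path
  obtain ⟨t, ht, hasc, hdesc⟩ := peak dep par hadj p hp
  have hslen : p.support.length = p.length + 1 := p.length_support
  have hfl : ∀ i, i ≤ p.length → (p.support.map f)[i]? = some (f (p.support.getD i u)) := by
    intro i hi
    have hlt : i < p.support.length := by omega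
    rw [List.getElem?_map, List.getElem?_eq_getElem hlt, List.getD_eq_getElem _ _ hlt]
    rfl
  have hanc_asc : ∀ j, j ≤ t → par^[j] (p.support.getD 0 u) = p.support.getD j u ∧
      dep (p.support.getD 0 u) = dep (p.support.getD j u) + j := by
    intro j
    induction j with
    | zero => exact fun _ => ⟨rfl, rfl⟩
    | succ jj ihj =>
      intro hj
      obtain ⟨h1, h2⟩ := ihj (by omega)
      obtain ⟨h3, h4⟩ := hasc jj (by omega)
      constructor
      · rw [Function.iterate_succ_apply', h1, h3]
      · omega
  have hanc_desc : ∀ j, j ≤ p.length - t →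
      par^[j] (p.support.getD p.length u) = p.support.getD (p.length - j) u ∧
      dep (p.support.getD p.length u) = dep (p.support.getD (p.length - j) u) + j := by
    intro j
    induction j with
    | zero => exact fun _ => ⟨rfl, by simp⟩
    | succ jj ihj =>
      intro hj
      obtain ⟨h1, h2⟩ := ihj (by omega)
      obtain ⟨h3, h4⟩ := hdesc (p.length - jj - 1) (by omega) (by omega)
      have he : p.length - jj - 1 + 1 = p.length - jj := by omega
      rw [he] at h3 h4
      have he2 : p.length - (jj+1) = p.length - jj - 1 := by omega
      constructor
      · rw [Function.iterate_succ_apply', h1, h3, he2]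
      · rw [he2]; omega
  have hsplit : n + krun ≤ t + 1 ∨ n + krun ≤ p.length - t + 1 := by omega
  rcases hsplit with hcase | hcase
  · -- ascending side
    have hgood := (hinv (dep (p.support.getD 0 u)) (p.support.getD 0 u) rfl).2.2.1 n hn1
    have hchl := (hinv (dep (p.support.getD 0 u)) (p.support.getD 0 u) rfl).1
    have hdepb : t ≤ dep (p.support.getD 0 u) := by
      have := (hanc_asc t le_rfl).2; omega
    have hrun : runPred n (ch (p.support.getD 0 u)) krun := by
      intro i hi
      have hint : i + n ≤ t := by omega
      refine ⟨by rw [hchl]; omega, ?_⟩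
      rw [hget (dep (p.support.getD 0 u)) (p.support.getD 0 u) rfl i (by omega),
          hget (dep (p.support.getD 0 u)) (p.support.getD 0 u) rfl (i+n) (by omega),
          (hanc_asc i (by omega)).1, (hanc_asc (i+n) hint).1]
      have h1 := hfl i (by omega)
      have h2 := hfl (i+n) (by omega)
      have h3 := hper i (by omega)
      rw [h1, h2] at h3
      exact h3
    have := le_run hrun
    omega
  · -- descending side
    have hgood := (hinv (dep (p.support.getD p.length u)) (p.support.getD p.length u) rfl).2.2.1 n hn1
    have hchl := (hinv (dep (p.support.getD p.length u)) (p.support.getD p.length u) rfl).1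
    have hdepb : p.length - t ≤ dep (p.support.getD p.length u) := by
      have := (hanc_desc (p.length - t) le_rfl).2; omega
    have hrun : runPred n (ch (p.support.getD p.length u)) krun := by
      intro i hi
      have hint : i + n ≤ p.length - t := by omega
      refine ⟨by rw [hchl]; omega, ?_⟩
      rw [hget (dep (p.support.getD p.length u)) (p.support.getD p.length u) rfl i (by omega),
          hget (dep (p.support.getD p.length u)) (p.support.getD p.length u) rfl (i+n) (by omega),
          (hanc_desc i (by omega)).1, (hanc_desc (i+n) hint).1]
      have hidx : p.length - (i+n) + n = p.length - i := by omega
      have h1 := hfl (p.length - i) (by omega)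
      have h2 := hfl (p.length - (i+n)) (by omega)
      have h3 := hper (p.length - (i+n)) (by omega)
      rw [hidx] at h3
      rw [h1, h2] at h3
      exact h3.symm
    have := le_run hrun
    omega
end

section
/- For every (finite) tree T and every list assignment {L_v}_{v ∈ V(T)} with |L_v| ≥ 8 for every vertex v, there exists a coloring f of T with f(v) ∈ L_v for every vertex v that is x^3-free, i.e., no simple path v_1, …, v_{3h} in T (h ≥ 1) has a color sequence consisting of three identical consecutive blocks: (f(v_1), …, f(v_h)) = (f(v_{h+1}), …, f(v_{2h})) = (f(v_{2h+1}), …, f(v_{3h})). -/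
/-- A coloring `f` of a graph `G` is `x³`-free if no simple path `v₁, …, v_{3h}`
(`h ≥ 1`) has a color sequence consisting of three identical consecutive blocks,
i.e., no simple path has a color sequence of the form `x ++ x ++ x` with `x`
nonempty. -/
def XCubeFree {V : Type} (G : SimpleGraph V) (f : V → ℕ) : Prop :=
  ∀ (u w : V) (p : G.Walk u w), p.IsPath →
    ∀ x : List ℕ, x ≠ [] → p.support.map f ≠ x ++ x ++ x

namespace XTree

open scoped Classical

variable {V : Type} {G : SimpleGraph V}

/-- the unique path from `r` to `v` in a tree -/
noncomputable def pt (hG : G.IsTree) (r v : V) : G.Walk r v :=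
  (hG.existsUnique_path r v).exists.choose

lemma pt_isPath (hG : G.IsTree) (r v : V) : (pt hG r v).IsPath :=
  (hG.existsUnique_path r v).exists.choose_spec

lemma pt_unique (hG : G.IsTree) {r v : V} (p : G.Walk r v) (hp : p.IsPath) :
    p = pt hG r v := by
  obtain ⟨q, hq, huniq⟩ := hG.existsUnique_path r v
  rw [huniq p hp, huniq _ (pt_isPath hG r v)]

noncomputable def depth (hG : G.IsTree) (r v : V) : ℕ := (pt hG r v).length

lemma pt_self (hG : G.IsTree) (r : V) : pt hG r r = SimpleGraph.Walk.nil :=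
  (pt_unique hG SimpleGraph.Walk.nil SimpleGraph.Walk.IsPath.nil).symm

lemma depth_self (hG : G.IsTree) (r : V) : depth hG r r = 0 := by
  simp [depth, pt_self]

lemma eq_root_of_depth_eq_zero (hG : G.IsTree) {r v : V} (h : depth hG r v = 0) : v = r :=
  ((pt hG r v).eq_of_length_eq_zero h).symm

lemma exists_decomp (hG : G.IsTree) {r v : V} (hv : v ≠ r) :
    ∃ (u : V) (q : G.Walk r u) (h : G.Adj u v),
      q.IsPath ∧ v ∉ q.support ∧ pt hG r v = q.concat h := by
  obtain ⟨u, hadj, q, hq⟩ := ((pt hG r v).reverse).exists_eq_cons_of_ne hv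
  refine ⟨u, q.reverse, hadj.symm, ?_, ?_, ?_⟩
  · have h1 : (pt hG r v).reverse.IsPath := (pt_isPath hG r v).reverse
    rw [hq] at h1
    exact ((SimpleGraph.Walk.cons_isPath_iff _ _).1 h1).1.reverse
  · have h1 : (pt hG r v).reverse.IsPath := (pt_isPath hG r v).reverse
    rw [hq] at h1
    have := ((SimpleGraph.Walk.cons_isPath_iff _ _).1 h1).2
    simpa using this
  · have := congrArg SimpleGraph.Walk.reverse hq
    rw [SimpleGraph.Walk.reverse_reverse] at this
    rw [this, SimpleGraph.Walk.reverse_cons, SimpleGraph.Walk.concat_eq_append]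

/-- parent function -/
noncomputable def par (hG : G.IsTree) (r v : V) : V :=
  if hv : v = r then r else (exists_decomp hG hv).choose

lemma par_root (hG : G.IsTree) (r : V) : par hG r r = r := by simp [par]

lemma par_spec (hG : G.IsTree) {r v : V} (hv : v ≠ r) :
    ∃ (q : G.Walk r (par hG r v)) (h : G.Adj (par hG r v) v),
      q.IsPath ∧ v ∉ q.support ∧ pt hG r v = q.concat h := by
  rw [par, dif_neg hv]
  exact (exists_decomp hG hv).choose_spec

lemma adj_par (hG : G.IsTree) {r v : V} (hv : v ≠ r) : G.Adj (par hG r v) v := by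
  obtain ⟨q, h, _⟩ := par_spec hG hv; exact h

lemma depth_par (hG : G.IsTree) {r v : V} (hv : v ≠ r) :
    depth hG r (par hG r v) + 1 = depth hG r v := by
  obtain ⟨q, h, hq, _, hpt⟩ := par_spec hG hv
  have : q = pt hG r (par hG r v) := pt_unique hG q hq
  rw [depth, depth, ← this, hpt, SimpleGraph.Walk.length_concat]

lemma par_eq_of_concat (hG : G.IsTree) {r v u : V} {q : G.Walk r u} {h : G.Adj u v}
    (hq : q.IsPath) (hpt : pt hG r v = q.concat h) : par hG r v = u := by
  have hv : v ≠ r := by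
    intro he
    subst he
    exact SimpleGraph.Walk.concat_ne_nil q h (by rw [← hpt, pt_self])
  obtain ⟨q', h', hq', _, hpt'⟩ := par_spec hG hv
  rw [hpt] at hpt'
  obtain ⟨he, -⟩ := SimpleGraph.Walk.concat_inj hpt'.symm
  exact he

lemma par_dichotomy (hG : G.IsTree) (r : V) {a b : V} (hadj : G.Adj a b) :
    par hG r a = b ∨ par hG r b = a := by
  classical
  by_cases hb : b ∈ (pt hG r a).support
  · -- pt r a passes through b; the tail must be the single edge b-a
    left
    have hsplit := (pt hG r a).take_spec hb
    have hpath := pt_isPath hG r a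
    have htake : ((pt hG r a).takeUntil b hb).IsPath := hpath.takeUntil hb
    have hdrop : ((pt hG r a).dropUntil b hb).IsPath := hpath.dropUntil hb
    -- unique path from b to a is the single edge
    have hedge : (SimpleGraph.Walk.cons hadj.symm SimpleGraph.Walk.nil : G.Walk b a).IsPath := by
      simp [SimpleGraph.Walk.cons_isPath_iff, hadj.ne']
    have huniq := hG.existsUnique_path b a
    obtain ⟨p0, hp0, hup⟩ := huniq
    have h1 : (pt hG r a).dropUntil b hb = SimpleGraph.Walk.cons hadj.symm SimpleGraph.Walk.nil := by
      rw [hup _ hdrop, hup _ hedge]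
    have h2 : ((pt hG r a).takeUntil b hb).concat hadj.symm = pt hG r a := by
      rw [SimpleGraph.Walk.concat_eq_append, ← h1, hsplit]
    exact par_eq_of_concat hG htake h2.symm
  · right
    have hcat : ((pt hG r a).concat hadj).IsPath := by
      rw [← SimpleGraph.Walk.isPath_reverse_iff, SimpleGraph.Walk.reverse_concat,
        SimpleGraph.Walk.cons_isPath_iff]
      refine ⟨(pt_isPath hG r a).reverse, ?_⟩
      rw [SimpleGraph.Walk.support_reverse, List.mem_reverse]
      exact hb
    have : pt hG r b = (pt hG r a).concat hadj := (pt_unique hG _ hcat).symm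
    exact par_eq_of_concat hG (pt_isPath hG r a) this

/-- iterated parent -/
noncomputable def anc (hG : G.IsTree) (r : V) (k : ℕ) (v : V) : V := (par hG r)^[k] v

@[simp] lemma anc_zero (hG : G.IsTree) (r v : V) : anc hG r 0 v = v := rfl

lemma anc_succ (hG : G.IsTree) (r : V) (k : ℕ) (v : V) :
    anc hG r (k+1) v = anc hG r k (par hG r v) := Function.iterate_succ_apply _ _ _

lemma anc_succ' (hG : G.IsTree) (r : V) (k : ℕ) (v : V) :
    anc hG r (k+1) v = par hG r (anc hG r k v) := Function.iterate_succ_apply' _ _ _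

lemma depth_par_le (hG : G.IsTree) (r v : V) : depth hG r (par hG r v) ≤ depth hG r v := by
  by_cases hv : v = r
  · subst hv; rw [par_root]
  · have := depth_par hG hv; omega

lemma depth_anc_le (hG : G.IsTree) (r : V) (k : ℕ) (v : V) :
    depth hG r (anc hG r k v) ≤ depth hG r v := by
  induction k with
  | zero => simp
  | succ k ih => rw [anc_succ']; exact le_trans (depth_par_le hG r _) ih

lemma depth_anc (hG : G.IsTree) (r : V) {k : ℕ} {v : V} (hk : k ≤ depth hG r v) :
    depth hG r (anc hG r k v) = depth hG r v - k := by
  induction k with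
  | zero => simp
  | succ k ih =>
    have hk' : k ≤ depth hG r v := by omega
    have h1 := ih hk'
    rw [anc_succ']
    have hne : anc hG r k v ≠ r := by
      intro h
      rw [h, depth_self] at h1
      omega
    have := depth_par hG hne
    omega

lemma anc_eq_root (hG : G.IsTree) (r : V) {k : ℕ} {v : V} (hk : depth hG r v ≤ k) :
    anc hG r k v = r := by
  induction k with
  | zero => simp at hk ⊢; exact eq_root_of_depth_eq_zero hG (by omega)
  | succ k ih =>
    by_cases h : depth hG r v ≤ k
    · rw [anc_succ', ih h, par_root]
    · have hk' : depth hG r v = k + 1 := by omega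
      rw [anc_succ']
      have : depth hG r (anc hG r k v) = depth hG r v - k := depth_anc hG r (by omega)
      have h0 : anc hG r k v ≠ r := by
        intro h'
        rw [h', depth_self] at this; omega
      have hdp := depth_par hG h0
      exact eq_root_of_depth_eq_zero hG (by omega)

lemma depth_anc_lt (hG : G.IsTree) (r : V) {k : ℕ} {v : V} (hv : v ≠ r) (hk : 1 ≤ k) :
    depth hG r (anc hG r k v) < depth hG r v := by
  have hd : 1 ≤ depth hG r v := by
    rcases Nat.eq_zero_or_pos (depth hG r v) with h | h
    · exact absurd (eq_root_of_depth_eq_zero hG h) hv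
    · omega
  obtain ⟨k', rfl⟩ : ∃ k', k = k' + 1 := ⟨k - 1, by omega⟩
  rw [anc_succ]
  calc depth hG r (anc hG r k' (par hG r v)) ≤ depth hG r (par hG r v) := depth_anc_le hG r _ _
    _ < depth hG r v := by have := depth_par hG hv; omega

/-! ### The greedy potential machinery -/

def qh (h : ℕ) : ℕ := h / 2

variable (hG : G.IsTree) (r : V)

/-- the matching predicate for periodicity along the ancestor chain -/
def Pm (g : V → ℕ) (h : ℕ) (v : V) (j : ℕ) : Prop :=
  j + h ≤ depth hG r v ∧ ∀ k ∈ Finset.Icc 1 j, g (anc hG r k v) = g (anc hG r (k + h) v)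

lemma Pm_mono (g : V → ℕ) (h : ℕ) (v : V) {j j' : ℕ} (hj : j' ≤ j)
    (hP : Pm hG r g h v j) : Pm hG r g h v j' := by
  refine ⟨by have := hP.1; omega, fun k hk => hP.2 k ?_⟩
  simp only [Finset.mem_Icc] at hk ⊢
  omega

/-- length of the maximal suffix-aligned periodicity run -/
noncomputable def run (g : V → ℕ) (h : ℕ) (v : V) : ℕ :=
  Nat.findGreatest (Pm hG r g h v) (qh h)

lemma run_le (g : V → ℕ) (h : ℕ) (v : V) : run hG r g h v ≤ qh h :=
  Nat.findGreatest_le _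

lemma run_spec (g : V → ℕ) (h : ℕ) (v : V) (hr : run hG r g h v ≠ 0) :
    Pm hG r g h v (run hG r g h v) :=
  Nat.findGreatest_of_ne_zero rfl hr

lemma run_ge (g : V → ℕ) (h : ℕ) (v : V) {j : ℕ} (hj : j ≤ qh h)
    (hP : Pm hG r g h v j) : j ≤ run hG r g h v :=
  Nat.le_findGreatest hj hP

lemma run_pos_iff (g : V → ℕ) {h : ℕ} (hh : 2 ≤ h) {v : V} (hv : v ≠ r) :
    1 ≤ run hG r g h v ↔
      (h ≤ depth hG r (par hG r v) ∧ g (par hG r v) = g (anc hG r h (par hG r v))) := by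
  have hdep := depth_par hG hv
  constructor
  · intro h1
    have hP := run_spec hG r g h v (by omega)
    have hP1 := Pm_mono hG r g h v h1 hP
    obtain ⟨hw, hm⟩ := hP1
    have hm1 := hm 1 (by simp)
    rw [show (1:ℕ) + h = h + 1 by omega] at hm1
    rw [anc_succ hG r h v] at hm1
    have h0 : anc hG r 1 v = par hG r v := by
      rw [anc_succ' hG r 0 v, anc_zero]
    rw [h0] at hm1
    exact ⟨by omega, hm1⟩
  · rintro ⟨hw, hm⟩
    refine run_ge hG r g h v (by simp [qh]; omega) ⟨by omega, ?_⟩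
    intro k hk
    simp only [Finset.mem_Icc] at hk
    have hk1 : k = 1 := by omega
    subst hk1
    rw [show (1:ℕ) + h = h + 1 by omega, anc_succ hG r h v]
    rw [show anc hG r 1 v = par hG r v from by rw [anc_succ' hG r 0 v, anc_zero]]
    exact hm

lemma run_succ_eq (g : V → ℕ) {h : ℕ} (hh : 2 ≤ h) {v : V} (hv : v ≠ r)
    (h1 : 1 ≤ run hG r g h v) :
    run hG r g h v = min (run hG r g h (par hG r v) + 1) (qh h) := by
  set u := par hG r v with hu
  have hdep := depth_par hG hv
  rw [← hu] at hdep
  have hq1 : 1 ≤ qh h := by simp [qh]; omega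
  have hshift : ∀ k, anc hG r (k+1) v = anc hG r k u := fun k => anc_succ hG r k v
  -- upper bound: run v ≤ run u + 1
  have hub : run hG r g h v ≤ run hG r g h u + 1 := by
    rcases Nat.lt_or_ge (run hG r g h v) 2 with h2 | h2
    · omega
    · have hP := run_spec hG r g h v (by omega)
      have hTarget : Pm hG r g h u (run hG r g h v - 1) := by
        constructor
        · have h3 := hP.1; omega
        · intro k hk
          simp only [Finset.mem_Icc] at hk
          have := hP.2 (k+1) (by simp only [Finset.mem_Icc]; omega)
          rw [hshift k] at this
          rw [show k + 1 + h = k + h + 1 by omega, hshift (k+h)] at this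
          exact this
      have := run_ge hG r g h u (by have := run_le hG r g h v; omega) hTarget
      omega
  -- lower bound
  have hcond := (run_pos_iff hG r g hh hv).1 h1
  rw [← hu] at hcond
  have hlb : min (run hG r g h u + 1) (qh h) ≤ run hG r g h v := by
    set j := min (run hG r g h u + 1) (qh h) with hj
    refine run_ge hG r g h v (by omega) ?_
    constructor
    · -- window : j + h ≤ depth v
      rcases Nat.eq_zero_or_pos (run hG r g h u) with h0 | h0
      · have : j ≤ 1 := by omega
        omega
      · have hPu := run_spec hG r g h u (by omega)
        have := hPu.1
        omega
    · intro k hk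
      simp only [Finset.mem_Icc] at hk
      rcases Nat.eq_or_lt_of_le hk.1 with h1k | h1k
      · -- k = 1
        rw [← h1k]
        rw [show (1:ℕ) + h = h + 1 by omega, anc_succ hG r h v]
        rw [show anc hG r 1 v = par hG r v from by rw [anc_succ' hG r 0 v, anc_zero]]
        exact hcond.2
      · -- k ≥ 2
        have hru : 1 ≤ run hG r g h u := by omega
        have hPu := run_spec hG r g h u (by omega)
        have := hPu.2 (k-1) (by simp only [Finset.mem_Icc]; omega)
        rw [show k = (k-1) + 1 by omega, hshift (k-1),
          show k - 1 + 1 + h = (k - 1 + h) + 1 by omega, hshift (k-1+h)]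
        exact this
  have hrle := run_le hG r g h v
  omega

lemma run_zero_of_no_window (g : V → ℕ) {h : ℕ} {v : V} (hw : ¬ (1 + h ≤ depth hG r v)) :
    run hG r g h v = 0 := by
  by_contra h0
  have := (run_spec hG r g h v h0).1
  have h1 : 1 ≤ run hG r g h v := by omega
  omega

noncomputable def phiT (g : V → ℕ) (h : ℕ) (v : V) : ℚ :=
  if 1 ≤ run hG r g h v then (2:ℚ)^(run hG r g h v) * ((2:ℚ)^(qh h))⁻¹ else 0

noncomputable def Phi (g : V → ℕ) (v : V) : ℚ :=
  ∑ h ∈ Finset.Icc 2 (depth hG r v), phiT hG r g h v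

noncomputable def PhiN (g : V → ℕ) (v : V) (a : ℕ) : ℚ :=
  ∑ h ∈ Finset.Icc 2 (depth hG r v + 1),
    if h ≤ depth hG r v ∧ a = g (anc hG r h v)
    then (2:ℚ)^(min (run hG r g h v + 1) (qh h)) * ((2:ℚ)^(qh h))⁻¹ else 0

noncomputable def banned (g : V → ℕ) (v : V) : Finset ℕ :=
  ((Finset.Icc 1 (depth hG r v)).filter
    (fun h => h + qh h ≤ depth hG r v ∧ run hG r g h v = qh h)).image
    (fun h => g (anc hG r h v))

lemma phiT_nonneg (g : V → ℕ) (h : ℕ) (v : V) : 0 ≤ phiT hG r g h v := by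
  unfold phiT
  split
  · positivity
  · exact le_refl 0

lemma Phi_nonneg (g : V → ℕ) (v : V) : 0 ≤ Phi hG r g v :=
  Finset.sum_nonneg fun h _ => phiT_nonneg hG r g h v

lemma Phi_trans (g : V → ℕ) {v : V} (hv : v ≠ r) :
    Phi hG r g v = PhiN hG r g (par hG r v) (g (par hG r v)) := by
  have hdep := depth_par hG hv
  unfold Phi PhiN
  rw [← hdep]
  apply Finset.sum_congr rfl
  intro h hh
  simp only [Finset.mem_Icc] at hh
  by_cases hc : h ≤ depth hG r (par hG r v) ∧ g (par hG r v) = g (anc hG r h (par hG r v))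
  · rw [if_pos hc]
    have h1 : 1 ≤ run hG r g h v := (run_pos_iff hG r g hh.1 hv).2 hc
    rw [phiT, if_pos h1, run_succ_eq hG r g hh.1 hv h1]
  · rw [if_neg hc]
    have h0 : ¬ (1 ≤ run hG r g h v) := fun h1 => hc ((run_pos_iff hG r g hh.1 hv).1 h1)
    rw [phiT, if_neg h0]

lemma geom_bound : ∀ m : ℕ, (∑ h ∈ Finset.Icc 2 m, ((2:ℚ)^(qh h))⁻¹) ≤ 2 := by
  have aux : ∀ j : ℕ, (∑ h ∈ Finset.Icc 2 (2*j+1), ((2:ℚ)^(qh h))⁻¹)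
      ≤ 2 - 2 * ((2:ℚ)^j)⁻¹ := by
    intro j
    induction j with
    | zero => simp
    | succ j ih =>
      have h1 : 2 * (j+1) + 1 = (2*j + 2) + 1 := by ring
      rw [h1, Finset.sum_Icc_succ_top (by omega), Finset.sum_Icc_succ_top (by omega)]
      have hq1 : qh (2*j+2) = j + 1 := by unfold qh; omega
      have hq2 : qh (2*j+2+1) = j + 1 := by unfold qh; omega
      rw [hq1, hq2]
      have h2 : ((2:ℚ)^(j+1))⁻¹ + ((2:ℚ)^(j+1))⁻¹ = ((2:ℚ)^j)⁻¹ := by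
        have hne : ((2:ℚ)^j) ≠ 0 := by positivity
        rw [pow_succ]
        field_simp
        try ring
      calc (∑ h ∈ Finset.Icc 2 (2*j+1), ((2:ℚ)^(qh h))⁻¹) + ((2:ℚ)^(j+1))⁻¹ + ((2:ℚ)^(j+1))⁻¹
          ≤ 2 - 2 * ((2:ℚ)^j)⁻¹ + (((2:ℚ)^(j+1))⁻¹ + ((2:ℚ)^(j+1))⁻¹) := by linarith
        _ = 2 - 2 * ((2:ℚ)^j)⁻¹ + ((2:ℚ)^j)⁻¹ := by rw [h2]
        _ = 2 - 2 * ((2:ℚ)^(j+1))⁻¹ := by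
            have h3 : 2 * ((2:ℚ)^(j+1))⁻¹ = ((2:ℚ)^j)⁻¹ := by
              have hne : ((2:ℚ)^j) ≠ 0 := by positivity
              rw [pow_succ]
              field_simp
              try ring
            linarith
  intro m
  calc (∑ h ∈ Finset.Icc 2 m, ((2:ℚ)^(qh h))⁻¹)
      ≤ ∑ h ∈ Finset.Icc 2 (2*m+1), ((2:ℚ)^(qh h))⁻¹ := by
        apply Finset.sum_le_sum_of_subset_of_nonneg
        · apply Finset.Icc_subset_Icc_right; omega
        · intro i _ _; positivity
    _ ≤ 2 - 2 * ((2:ℚ)^m)⁻¹ := aux m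
    _ ≤ 2 := by
        have : (0:ℚ) < ((2:ℚ)^m)⁻¹ := by positivity
        linarith

lemma exists_good (L : V → Finset ℕ) (g : V → ℕ) (v : V) (hL : 8 ≤ (L v).card)
    (hPhi : Phi hG r g v ≤ 4) :
    ∃ a ∈ L v, a ∉ banned hG r g v ∧ PhiN hG r g v a ≤ 4 := by
  classical
  set D := depth hG r v with hD
  -- the set of full runs with h ≥ 2
  set fulls := (Finset.Icc 2 D).filter
    (fun h => h + qh h ≤ D ∧ run hG r g h v = qh h) with hfulls
  have hfullcard : (fulls.card : ℚ) ≤ Phi hG r g v := by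
    have h1 : ∀ h ∈ fulls, (1:ℚ) ≤ phiT hG r g h v := by
      intro h hh
      simp only [hfulls, Finset.mem_filter, Finset.mem_Icc] at hh
      have hq : 1 ≤ qh h := by simp [qh]; omega
      have hr : 1 ≤ run hG r g h v := by omega
      rw [phiT, if_pos hr, hh.2.2]
      rw [mul_inv_cancel₀ (by positivity)]
    calc (fulls.card : ℚ) = ∑ _h ∈ fulls, (1:ℚ) := by simp
      _ ≤ ∑ h ∈ fulls, phiT hG r g h v := Finset.sum_le_sum h1
      _ ≤ Phi hG r g v := by
          apply Finset.sum_le_sum_of_subset_of_nonneg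
          · exact Finset.filter_subset _ _
          · intro i _ _; exact phiT_nonneg hG r g i v
  have hfull4 : fulls.card ≤ 4 := by
    by_contra hcon
    push_neg at hcon
    have : (5:ℚ) ≤ (fulls.card : ℚ) := by exact_mod_cast hcon
    linarith
  have hbanned : (banned hG r g v).card ≤ 5 := by
    have hsub : (Finset.Icc 1 D).filter
        (fun h => h + qh h ≤ D ∧ run hG r g h v = qh h) ⊆ insert 1 fulls := by
      intro h hh
      simp only [Finset.mem_filter, Finset.mem_Icc] at hh
      rcases Nat.eq_or_lt_of_le hh.1.1 with h1 | h1
      · simp [← h1]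
      · simp only [Finset.mem_insert, hfulls, Finset.mem_filter, Finset.mem_Icc]
        right
        exact ⟨⟨h1, hh.1.2⟩, hh.2⟩
    calc (banned hG r g v).card ≤ ((Finset.Icc 1 D).filter _).card :=
          Finset.card_image_le
      _ ≤ (insert 1 fulls).card := Finset.card_le_card hsub
      _ ≤ fulls.card + 1 := Finset.card_insert_le _ _
      _ ≤ 5 := by omega
  set A := L v \ banned hG r g v with hA
  have hAcard : 3 ≤ A.card := by
    have h1 : (L v).card ≤ ((L v) ∪ (banned hG r g v)).card := Finset.card_le_card
      Finset.subset_union_left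
    have h2 := Finset.card_sdiff_add_card (L v) (banned hG r g v)
    rw [← hA] at h2
    omega
  -- sum bound
  have hsum : (∑ a ∈ A, PhiN hG r g v a) ≤ 2 * Phi hG r g v + 4 := by
    unfold PhiN
    rw [Finset.sum_comm]
    have hterm : ∀ h ∈ Finset.Icc 2 (D + 1),
        (∑ a ∈ A, if h ≤ D ∧ a = g (anc hG r h v)
          then (2:ℚ)^(min (run hG r g h v + 1) (qh h)) * ((2:ℚ)^(qh h))⁻¹ else 0)
        ≤ 2 * phiT hG r g h v + 2 * ((2:ℚ)^(qh h))⁻¹ := by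
      intro h hh
      simp only [Finset.mem_Icc] at hh
      set w := (2:ℚ)^(min (run hG r g h v + 1) (qh h)) * ((2:ℚ)^(qh h))⁻¹ with hw
      have hw0 : 0 ≤ w := by positivity
      have hwb : w ≤ 2 * phiT hG r g h v + 2 * ((2:ℚ)^(qh h))⁻¹ := by
        rcases Nat.eq_zero_or_pos (run hG r g h v) with h0 | h0
        · have : min (run hG r g h v + 1) (qh h) ≤ 1 := by omega
          have hle : (2:ℚ)^(min (run hG r g h v + 1) (qh h)) ≤ 2^1 :=
            pow_le_pow_right₀ (by norm_num) this
          have : phiT hG r g h v = 0 := by rw [phiT, if_neg (by omega)]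
          rw [this, hw]
          have h2 : (0:ℚ) < ((2:ℚ)^(qh h))⁻¹ := by positivity
          calc (2:ℚ)^(min (run hG r g h v + 1) (qh h)) * ((2:ℚ)^(qh h))⁻¹
              ≤ 2^1 * ((2:ℚ)^(qh h))⁻¹ := by
                apply mul_le_mul_of_nonneg_right hle (le_of_lt h2)
            _ = 2 * ((2:ℚ)^(qh h))⁻¹ := by norm_num
            _ ≤ 2 * 0 + 2 * ((2:ℚ)^(qh h))⁻¹ := by linarith
        · have hle : (2:ℚ)^(min (run hG r g h v + 1) (qh h)) ≤ 2^(run hG r g h v + 1) :=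
            pow_le_pow_right₀ (by norm_num) (min_le_left _ _)
          have hphi : phiT hG r g h v = (2:ℚ)^(run hG r g h v) * ((2:ℚ)^(qh h))⁻¹ := by
            rw [phiT, if_pos (by omega)]
          have h2 : (0:ℚ) < ((2:ℚ)^(qh h))⁻¹ := by positivity
          calc w ≤ 2^(run hG r g h v + 1) * ((2:ℚ)^(qh h))⁻¹ :=
                mul_le_mul_of_nonneg_right hle (le_of_lt h2)
            _ = 2 * ((2:ℚ)^(run hG r g h v) * ((2:ℚ)^(qh h))⁻¹) := by rw [pow_succ]; ring
            _ = 2 * phiT hG r g h v := by rw [hphi]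
            _ ≤ 2 * phiT hG r g h v + 2 * ((2:ℚ)^(qh h))⁻¹ := by linarith
      calc (∑ a ∈ A, if h ≤ D ∧ a = g (anc hG r h v) then w else 0)
          = (∑ a ∈ A, if a = g (anc hG r h v) then (if h ≤ D then w else 0) else 0) := by
            apply Finset.sum_congr rfl
            intro a _
            by_cases h1 : a = g (anc hG r h v) <;> by_cases h2 : h ≤ D <;>
              simp [h1, h2]
        _ = if g (anc hG r h v) ∈ A then (if h ≤ D then w else 0) else 0 :=
            Finset.sum_ite_eq' A _ _
        _ ≤ w := by
            split_ifs <;> simp [hw0]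
        _ ≤ 2 * phiT hG r g h v + 2 * ((2:ℚ)^(qh h))⁻¹ := hwb
    calc (∑ h ∈ Finset.Icc 2 (D+1), ∑ a ∈ A, _)
        ≤ ∑ h ∈ Finset.Icc 2 (D + 1),
            (2 * phiT hG r g h v + 2 * ((2:ℚ)^(qh h))⁻¹) := Finset.sum_le_sum hterm
      _ = 2 * (∑ h ∈ Finset.Icc 2 (D+1), phiT hG r g h v)
          + 2 * (∑ h ∈ Finset.Icc 2 (D+1), ((2:ℚ)^(qh h))⁻¹) := by
          rw [Finset.sum_add_distrib, Finset.mul_sum, Finset.mul_sum]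
      _ ≤ 2 * (Phi hG r g v) + 2 * 2 := by
          have hs1 : (∑ h ∈ Finset.Icc 2 (D+1), phiT hG r g h v) = Phi hG r g v := by
            have hz : phiT hG r g (D+1) v = 0 := by
              rw [phiT, if_neg]
              rw [run_zero_of_no_window hG r g (by rw [← hD]; omega)]
              omega
            rcases Nat.eq_zero_or_pos D with h0 | h0
            · rw [Phi, ← hD, h0]
              rw [show Finset.Icc 2 (0+1) = (∅ : Finset ℕ) from by decide,
                show Finset.Icc 2 0 = (∅ : Finset ℕ) from by decide]
            · rw [Phi, ← hD, Finset.sum_Icc_succ_top (by omega : 2 ≤ D + 1), hz, add_zero]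
          rw [hs1]
          have := geom_bound (D+1)
          linarith
      _ = 2 * Phi hG r g v + 4 := by ring
  -- conclude
  by_contra hcon
  push_neg at hcon
  have hlt : ∀ a ∈ A, (4:ℚ) < PhiN hG r g v a := by
    intro a ha
    rw [hA, Finset.mem_sdiff] at ha
    exact hcon a ha.1 ha.2
  have hne : A.Nonempty := Finset.card_pos.1 (by omega)
  have h12 : (12:ℚ) ≤ 4 * A.card := by
    have : (3:ℚ) ≤ (A.card : ℚ) := by exact_mod_cast hAcard
    linarith
  have hstrict : (4:ℚ) * A.card < ∑ a ∈ A, PhiN hG r g v a := by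
    have := Finset.sum_lt_sum_of_nonempty hne hlt
    calc (4:ℚ) * A.card = ∑ _a ∈ A, (4:ℚ) := by
          rw [Finset.sum_const, nsmul_eq_mul]; ring
      _ < ∑ a ∈ A, PhiN hG r g v a := this
  linarith

noncomputable def pick (L : V → Finset ℕ) (g : V → ℕ) (v : V) : ℕ :=
  if hEx : ∃ a ∈ L v, a ∉ banned hG r g v ∧ PhiN hG r g v a ≤ 4 then hEx.choose
  else if hne : (L v).Nonempty then (L v).min' hne else 0

lemma pick_mem (L : V → Finset ℕ) (g : V → ℕ) (v : V) (hL : 8 ≤ (L v).card) :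
    pick hG r L g v ∈ L v := by
  unfold pick
  split
  · next hEx => exact hEx.choose_spec.1
  · split
    · exact Finset.min'_mem _ _
    · next hne => exact absurd (Finset.card_pos.mp (by omega)) hne

lemma pick_spec (L : V → Finset ℕ) (g : V → ℕ) (v : V)
    (hEx : ∃ a ∈ L v, a ∉ banned hG r g v ∧ PhiN hG r g v a ≤ 4) :
    pick hG r L g v ∉ banned hG r g v ∧ PhiN hG r g v (pick hG r L g v) ≤ 4 := by
  unfold pick
  rw [dif_pos hEx]
  exact ⟨hEx.choose_spec.2.1, hEx.choose_spec.2.2⟩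

lemma findGreatest_congr {P Q : ℕ → Prop} [DecidablePred P] [DecidablePred Q]
    (hiff : ∀ n, P n ↔ Q n) : ∀ b, Nat.findGreatest P b = Nat.findGreatest Q b
  | 0 => rfl
  | (b+1) => by
    rw [Nat.findGreatest_succ, Nat.findGreatest_succ]
    by_cases hP : P (b+1)
    · rw [if_pos hP, if_pos ((hiff _).1 hP)]
    · rw [if_neg hP, if_neg (fun h => hP ((hiff _).2 h)),
        findGreatest_congr hiff b]

lemma run_congr {g g' : V → ℕ} {v : V}
    (hagree : ∀ u, depth hG r u < depth hG r v → g u = g' u) {h : ℕ} (hh : 1 ≤ h) :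
    run hG r g h v = run hG r g' h v := by
  apply findGreatest_congr
  intro j
  unfold Pm
  by_cases hv : v = r
  · subst hv
    rw [depth_self]
    constructor <;> rintro ⟨hw, -⟩ <;> omega
  · constructor <;> rintro ⟨hw, hm⟩ <;> refine ⟨hw, fun k hk => ?_⟩
    · have hk1 : 1 ≤ k := (Finset.mem_Icc.1 hk).1
      rw [← hagree _ (depth_anc_lt hG r hv hk1),
        ← hagree _ (depth_anc_lt hG r hv (by omega : 1 ≤ k + h))]
      exact hm k hk
    · have hk1 : 1 ≤ k := (Finset.mem_Icc.1 hk).1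
      rw [hagree _ (depth_anc_lt hG r hv hk1),
        hagree _ (depth_anc_lt hG r hv (by omega : 1 ≤ k + h))]
      exact hm k hk

lemma banned_congr {g g' : V → ℕ} {v : V}
    (hagree : ∀ u, depth hG r u < depth hG r v → g u = g' u) :
    banned hG r g v = banned hG r g' v := by
  by_cases hv : v = r
  · subst hv
    unfold banned
    rw [depth_self]
    rfl
  · unfold banned
    have hfil : (Finset.Icc 1 (depth hG r v)).filter
        (fun h => h + qh h ≤ depth hG r v ∧ run hG r g h v = qh h)
        = (Finset.Icc 1 (depth hG r v)).filter
        (fun h => h + qh h ≤ depth hG r v ∧ run hG r g' h v = qh h) := by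
      apply Finset.filter_congr
      intro h hmem
      have hh1 : 1 ≤ h := (Finset.mem_Icc.1 hmem).1
      rw [run_congr hG r hagree hh1]
    rw [hfil]
    apply Finset.image_congr
    intro h hmem
    simp only [Finset.coe_filter, Set.mem_setOf_eq, Finset.mem_Icc] at hmem
    exact hagree _ (depth_anc_lt hG r hv hmem.1.1)

lemma PhiN_congr {g g' : V → ℕ} {v : V}
    (hagree : ∀ u, depth hG r u < depth hG r v → g u = g' u) (a : ℕ) :
    PhiN hG r g v a = PhiN hG r g' v a := by
  unfold PhiN
  apply Finset.sum_congr rfl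
  intro h hmem
  simp only [Finset.mem_Icc] at hmem
  by_cases hv : v = r
  · subst hv
    rw [depth_self]
    rw [if_neg (by omega), if_neg (by omega)]
  · by_cases hc : h ≤ depth hG r v
    · rw [hagree _ (depth_anc_lt hG r hv (by omega : 1 ≤ h)),
        run_congr hG r hagree (by omega : 1 ≤ h)]
    · rw [if_neg (by tauto), if_neg (by tauto)]

lemma pick_congr (L : V → Finset ℕ) {g g' : V → ℕ} {v : V}
    (hagree : ∀ u, depth hG r u < depth hG r v → g u = g' u) :
    pick hG r L g v = pick hG r L g' v := by
  unfold pick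
  rw [banned_congr hG r hagree, funext (PhiN_congr hG r hagree)]

noncomputable def stage (L : V → Finset ℕ) : ℕ → V → ℕ
  | 0 => fun v => pick hG r L (fun _ => 0) v
  | (n+1) => fun v =>
      if depth hG r v = n + 1 then pick hG r L (stage L n) v else stage L n v

lemma stage_stable (L : V → Finset ℕ) :
    ∀ m n (v : V), depth hG r v ≤ n → n ≤ m → stage hG r L n v = stage hG r L m v := by
  intro m
  induction m with
  | zero => intro n v _ hnm; interval_cases n; rfl
  | succ m ih =>
    intro n v hd hnm
    rcases Nat.eq_or_lt_of_le hnm with he | hlt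
    · rw [he]
    · have h1 : n ≤ m := by omega
      rw [ih n v hd h1]
      show stage hG r L m v = stage hG r L (m+1) v
      have : ¬ (depth hG r v = m + 1) := by omega
      rw [show stage hG r L (m+1) v =
        (if depth hG r v = m + 1 then pick hG r L (stage hG r L m) v
          else stage hG r L m v) from rfl, if_neg this]

noncomputable def col (L : V → Finset ℕ) (v : V) : ℕ := stage hG r L (depth hG r v) v

lemma col_eq_pick (L : V → Finset ℕ) (v : V) : col hG r L v = pick hG r L (col hG r L) v := by
  unfold col
  rcases Nat.eq_zero_or_pos (depth hG r v) with h0 | h0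
  · rw [h0]
    show pick hG r L (fun _ => 0) v = _
    apply pick_congr
    intro u hu
    omega
  · obtain ⟨n, hn⟩ : ∃ n, depth hG r v = n + 1 := ⟨depth hG r v - 1, by omega⟩
    rw [hn]
    show (if depth hG r v = n + 1 then pick hG r L (stage hG r L n) v
      else stage hG r L n v) = _
    rw [if_pos hn]
    apply pick_congr
    intro u hu
    show stage hG r L n u = stage hG r L (depth hG r u) u
    exact (stage_stable hG r L n (depth hG r u) u (le_refl _) (by omega)).symm

lemma Phi_col_le (L : V → Finset ℕ) (hL : ∀ v : V, 8 ≤ (L v).card) :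
    ∀ n (v : V), depth hG r v = n → Phi hG r (col hG r L) v ≤ 4 := by
  intro n
  induction n with
  | zero =>
    intro v hv
    rw [Phi, hv]
    simp
  | succ n ih =>
    intro v hv
    have hvr : v ≠ r := by
      intro h; rw [h, depth_self] at hv; omega
    have hdp := depth_par hG hvr
    have hPhiU : Phi hG r (col hG r L) (par hG r v) ≤ 4 := ih _ (by omega)
    have hEx := exists_good hG r L (col hG r L) (par hG r v) (hL _) hPhiU
    have hps := pick_spec hG r L (col hG r L) (par hG r v) hEx
    rw [Phi_trans hG r (col hG r L) hvr, col_eq_pick hG r L (par hG r v)]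
    exact hps.2

lemma no_pattern (L : V → Finset ℕ) (hL : ∀ v : V, 8 ≤ (L v).card)
    (v : V) (h : ℕ) (hh : 1 ≤ h) (hwin : h + qh h ≤ depth hG r v) :
    ¬ (∀ k, k ≤ qh h → col hG r L (anc hG r k v) = col hG r L (anc hG r (k + h) v)) := by
  intro hpat
  have hPhi : Phi hG r (col hG r L) v ≤ 4 := Phi_col_le hG r L hL (depth hG r v) v rfl
  have hEx := exists_good hG r L (col hG r L) v (hL v) hPhi
  have hps := pick_spec hG r L (col hG r L) v hEx
  have hcol := col_eq_pick hG r L v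
  have hrun : run hG r (col hG r L) h v = qh h := by
    apply le_antisymm (run_le hG r _ h v)
    apply run_ge hG r _ h v (le_refl _)
    refine ⟨by omega, fun k hk => ?_⟩
    exact hpat k (Finset.mem_Icc.1 hk).2
  have hmem : col hG r L (anc hG r h v) ∈ banned hG r (col hG r L) v := by
    apply Finset.mem_image.2
    exact ⟨h, Finset.mem_filter.2 ⟨Finset.mem_Icc.2 ⟨hh, by omega⟩, ⟨hwin, hrun⟩⟩, rfl⟩
  have hnb := hps.1
  rw [← hcol] at hnb
  apply hnb
  have h0 := hpat 0 (Nat.zero_le _)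
  rw [anc_zero] at h0
  rw [h0]
  rw [show 0 + h = h by omega]
  exact hmem

/-! ### Walks in trees: up-then-down structure -/

lemma support_getElem? {a b : V} (p : G.Walk a b) :
    ∀ i, i ≤ p.length → p.support[i]? = some (p.getVert i) := by
  induction p with
  | nil =>
    intro i hi
    have h0 : i = 0 := by simpa using hi
    subst h0
    rfl
  | cons hadj q ih =>
    intro i hi
    cases i with
    | zero => simp [SimpleGraph.Walk.support_cons]
    | succ i =>
      rw [SimpleGraph.Walk.support_cons, List.getElem?_cons_succ]
      exact ih i (by simpa [SimpleGraph.Walk.length_cons] using hi)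

lemma getVert_inj {a b : V} {p : G.Walk a b} (hp : p.IsPath) {i j : ℕ}
    (hi : i ≤ p.length) (hj : j ≤ p.length) (hij : p.getVert i = p.getVert j) : i = j := by
  have h1 := support_getElem? p i hi
  have h2 := support_getElem? p j hj
  apply (List.getElem?_inj (l := p.support) (i := i) (j := j)
    (by rw [SimpleGraph.Walk.length_support]; omega) hp.support_nodup).1
  rw [h1, h2, hij]

lemma step_dichotomy (hG : G.IsTree) (r : V) {a b : V} (p : G.Walk a b) {i : ℕ}
    (hi : i < p.length) :
    p.getVert (i+1) = par hG r (p.getVert i) ∨ p.getVert i = par hG r (p.getVert (i+1)) := by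
  have hadj := p.adj_getVert_succ hi
  rcases par_dichotomy hG r hadj with h | h
  · left; exact h.symm
  · right; exact h.symm

lemma apex_exists (hG : G.IsTree) (r : V) {a b : V} (p : G.Walk a b) (hp : p.IsPath) :
    ∃ j, j ≤ p.length ∧ (∀ i, i < j → p.getVert (i+1) = par hG r (p.getVert i)) ∧
      (∀ i, j ≤ i → i < p.length → p.getVert i = par hG r (p.getVert (i+1))) := by
  classical
  by_cases hex : ∃ i, i < p.length ∧ p.getVert i = par hG r (p.getVert (i+1))
  · set j := Nat.find hex with hj
    have hspec := Nat.find_spec hex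
    refine ⟨j, by omega, ?_, ?_⟩
    · intro i hij
      have hnot := Nat.find_min hex hij
      have hil : i < p.length := by omega
      rcases step_dichotomy hG r p hil with h | h
      · exact h
      · exact absurd ⟨hil, h⟩ hnot
    · intro i hji hil
      induction i with
      | zero =>
        have : j = 0 := by omega
        rw [this] at hj
        exact hj ▸ hspec.2
      | succ i ih =>
        rcases Nat.eq_or_lt_of_le hji with he | hlt
        · rw [← he]; exact hspec.2
        · have hdowni : p.getVert i = par hG r (p.getVert (i+1)) :=
            ih (by omega) (by omega)
          rcases step_dichotomy hG r p hil with h | h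
          · exfalso
            have : p.getVert (i+2) = p.getVert i := by rw [h, ← hdowni]
            have := getVert_inj hp (by omega) (by omega) this
            omega
          · exact h
  · push_neg at hex
    refine ⟨p.length, le_refl _, ?_, ?_⟩
    · intro i hij
      rcases step_dichotomy hG r p hij with h | h
      · exact h
      · exact absurd h (hex i hij)
    · intro i h1 h2; omega

lemma anc_up (hG : G.IsTree) (r : V) {a b : V} (p : G.Walk a b) {j : ℕ}
    (hup : ∀ i, i < j → p.getVert (i+1) = par hG r (p.getVert i)) :
    ∀ k, k ≤ j → anc hG r k (p.getVert 0) = p.getVert k := by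
  intro k
  induction k with
  | zero => intro _; rfl
  | succ k ih =>
    intro hk
    rw [anc_succ', ih (by omega), ← hup k (by omega)]

lemma anc_down (hG : G.IsTree) (r : V) {a b : V} (p : G.Walk a b) {j : ℕ}
    (hdown : ∀ i, j ≤ i → i < p.length → p.getVert i = par hG r (p.getVert (i+1))) :
    ∀ k, k + j ≤ p.length → anc hG r k (p.getVert p.length) = p.getVert (p.length - k) := by
  intro k
  induction k with
  | zero => intro _; simp
  | succ k ih =>
    intro hk
    rw [anc_succ', ih (by omega)]
    have h1 : p.length - (k+1) ≥ j := by omega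
    have h2 : p.length - (k+1) < p.length := by omega
    have := hdown (p.length - (k+1)) h1 h2
    rw [show p.length - (k+1) + 1 = p.length - k by omega] at this
    exact this.symm

lemma depth_ge_up (hG : G.IsTree) (r : V) {a b : V} {p : G.Walk a b} (hp : p.IsPath) {j : ℕ}
    (hj : j ≤ p.length)
    (hup : ∀ i, i < j → p.getVert (i+1) = par hG r (p.getVert i)) :
    j ≤ depth hG r (p.getVert 0) := by
  by_contra hcon
  push_neg at hcon
  set d := depth hG r (p.getVert 0) with hd
  have h1 : anc hG r d (p.getVert 0) = p.getVert d := anc_up hG r p hup d (by omega)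
  have h2 : anc hG r j (p.getVert 0) = p.getVert j := anc_up hG r p hup j (le_refl _)
  have hr1 : anc hG r d (p.getVert 0) = r := anc_eq_root hG r (le_refl _)
  have hr2 : anc hG r j (p.getVert 0) = r := anc_eq_root hG r (by omega)
  have : p.getVert d = p.getVert j := by rw [← h1, ← h2, hr1, hr2]
  have := getVert_inj hp (by omega) hj this
  omega

lemma depth_ge_down (hG : G.IsTree) (r : V) {a b : V} {p : G.Walk a b} (hp : p.IsPath) {j : ℕ}
    (hj : j ≤ p.length)
    (hdown : ∀ i, j ≤ i → i < p.length → p.getVert i = par hG r (p.getVert (i+1))) :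
    p.length - j ≤ depth hG r (p.getVert p.length) := by
  by_contra hcon
  push_neg at hcon
  set d := depth hG r (p.getVert p.length) with hd
  have h1 : anc hG r d (p.getVert p.length) = p.getVert (p.length - d) :=
    anc_down hG r p hdown d (by omega)
  have h2 : anc hG r (p.length - j) (p.getVert p.length) = p.getVert (p.length - (p.length - j)) :=
    anc_down hG r p hdown (p.length - j) (by omega)
  have hr1 : anc hG r d (p.getVert p.length) = r := anc_eq_root hG r (le_refl _)
  have hr2 : anc hG r (p.length - j) (p.getVert p.length) = r := anc_eq_root hG r (by omega)
  have heq : p.getVert (p.length - d) = p.getVert (p.length - (p.length - j)) := by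
    rw [← h1, ← h2, hr1, hr2]
  have := getVert_inj hp (by omega) (by omega) heq
  omega

lemma cube_index_eq (x : List ℕ) {i : ℕ} (hi : i + x.length < 3 * x.length) :
    (x ++ x ++ x)[i + x.length]? = (x ++ x ++ x)[i]? := by
  set h := x.length with hh
  have hassoc : x ++ x ++ x = x ++ (x ++ x) := by rw [List.append_assoc]
  rw [hassoc]
  rcases Nat.lt_or_ge i h with hlt | hge
  · calc (x ++ (x ++ x))[i + h]?
        = (x ++ x)[i + h - x.length]? := List.getElem?_append_right (by omega)
      _ = (x ++ x)[i]? := by congr 1; omega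
      _ = x[i]? := List.getElem?_append_left (by omega)
      _ = (x ++ (x ++ x))[i]? := (List.getElem?_append_left (by omega)).symm
  · have hi2 : i < 2 * h := by omega
    calc (x ++ (x ++ x))[i + h]?
        = (x ++ x)[i + h - x.length]? := List.getElem?_append_right (by omega)
      _ = (x ++ x)[i]? := by congr 1; omega
      _ = x[i - x.length]? := List.getElem?_append_right (by omega)
      _ = (x ++ x)[i - x.length]? := (List.getElem?_append_left (by omega)).symm
      _ = (x ++ (x ++ x))[i]? := (List.getElem?_append_right (by omega)).symm

theorem col_xcubefree (hG : G.IsTree) (r : V) (L : V → Finset ℕ)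
    (hL : ∀ v : V, 8 ≤ (L v).card) : XCubeFree G (col hG r L) := by
  intro a b p hp x hx heq
  set h := x.length with hh
  have hh1 : 1 ≤ h := by
    have := List.length_pos_iff.2 hx
    omega
  have hlen3 : (x ++ x ++ x).length = 3 * h := by
    simp [List.length_append]
    omega
  have hplen : p.length + 1 = 3 * h := by
    have h1 := congrArg List.length heq
    rw [List.length_map, SimpleGraph.Walk.length_support, hlen3] at h1
    exact h1
  have hidx : ∀ i, i + h < 3 * h →
      col hG r L (p.getVert i) = col hG r L (p.getVert (i + h)) := by
    intro i hi
    have h1 : (p.support.map (col hG r L))[i]? = some (col hG r L (p.getVert i)) := by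
      rw [List.getElem?_map, support_getElem? p i (by omega)]
      rfl
    have h2 : (p.support.map (col hG r L))[i+h]? = some (col hG r L (p.getVert (i+h))) := by
      rw [List.getElem?_map, support_getElem? p (i+h) (by omega)]
      rfl
    have h3 := cube_index_eq x (i := i) (by omega)
    rw [← hh] at h3
    rw [heq] at h1 h2
    exact (Option.some.inj ((h2.symm.trans h3).trans h1)).symm
  obtain ⟨j, hj, hup, hdown⟩ := apex_exists hG r p hp
  have hq2 : 2 * qh h ≤ h := by unfold qh; omega
  rcases le_or_gt (j + h + qh h) p.length with hA | hB
  · -- the deep end is the endpoint b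
    have hwin : h + qh h ≤ depth hG r (p.getVert p.length) := by
      have hd := depth_ge_down hG r hp hj hdown
      omega
    refine no_pattern hG r L hL (p.getVert p.length) h hh1 hwin (fun k hk => ?_)
    have e1 : anc hG r k (p.getVert p.length) = p.getVert (p.length - k) :=
      anc_down hG r p hdown k (by omega)
    have e2 : anc hG r (k+h) (p.getVert p.length) = p.getVert (p.length - (k+h)) :=
      anc_down hG r p hdown (k+h) (by omega)
    rw [e1, e2]
    have := hidx (p.length - (k+h)) (by omega)
    rw [show p.length - (k+h) + h = p.length - k by omega] at this
    exact this.symm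
  · -- the deep end is the endpoint a
    have hjB : h + qh h ≤ j := by omega
    have hwin : h + qh h ≤ depth hG r (p.getVert 0) := by
      have hu := depth_ge_up hG r hp hj hup
      omega
    refine no_pattern hG r L hL (p.getVert 0) h hh1 hwin (fun k hk => ?_)
    have e1 : anc hG r k (p.getVert 0) = p.getVert k := anc_up hG r p hup k (by omega)
    have e2 : anc hG r (k+h) (p.getVert 0) = p.getVert (k+h) :=
      anc_up hG r p hup (k+h) (by omega)
    rw [e1, e2]
    exact hidx k (by omega)

end XTree

/-- Every finite tree admits, for any lists of size at least `8`, an `x³`-free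
coloring chosen from the lists. -/
theorem x_cube_free_choice_trees_eight :
    ∀ (V : Type) [Fintype V] (G : SimpleGraph V),
      G.IsTree →
      ∀ L : V → Finset ℕ, (∀ v : V, 8 ≤ (L v).card) →
      ∃ f : V → ℕ, (∀ v : V, f v ∈ L v) ∧ XCubeFree G f := by
  intro V _ G hG L hL
  obtain ⟨r⟩ : Nonempty V := hG.isConnected.nonempty
  refine ⟨XTree.col hG r L, fun v => ?_, XTree.col_xcubefree hG r L hL⟩
  rw [XTree.col_eq_pick]
  exact XTree.pick_mem hG r L _ v (hL v)
end

section
/- For every real ε > 0, setting c = 4·⌈1/ε⌉, the following holds: for every (finite) rooted tree T and every list assignment {L_v}_{v ∈ V(T)} with |L_v| ≥ c for every vertex v, there exists a coloring f of T with f(v) ∈ L_v for every vertex v that is vertically x^{1+ε}-free, i.e., no vertical path in T has a color sequence of the form x^{1+ε}. -/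
/-- In a graph `G` rooted at `root`, `u` is a descendant of `v` if every simple
path from `u` to the root contains `v` (in a tree the simple path is unique). -/
def IsDescendant {V : Type} (G : SimpleGraph V) (root u v : V) : Prop :=
  ∀ p : G.Walk u root, p.IsPath → v ∈ p.support

/-- A simple path is vertical if its first vertex is a descendant of its last
vertex or vice versa. -/
def IsVerticalPath {V : Type} (G : SimpleGraph V) (root : V) {u w : V}
    (p : G.Walk u w) : Prop :=
  p.IsPath ∧ (IsDescendant G root u w ∨ IsDescendant G root w u)

namespace VertFree


/-- match-run of period `n` at the head of the reversed word. -/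
def run : List ℕ → ℕ → ℕ
  | [], _ => 0
  | a :: w, n => if (a :: w)[n]? = some a then run w n + 1 else 0

def Good (t : ℕ → ℕ) (w : List ℕ) : Prop :=
  ∀ s n, 1 ≤ n → run (w.drop s) n < t n

noncomputable def psi (t : ℕ → ℕ) (w : List ℕ) : ℝ :=
  ∑ n ∈ Finset.Icc 1 w.length,
    if 2 ≤ t n then ((2:ℝ) ^ (run w n) - 1) * (2:ℝ) ^ (-(t n : ℤ)) else 0

lemma run_cons (a : ℕ) (w : List ℕ) (n : ℕ) (hn : 1 ≤ n) :
    run (a :: w) n = if w[n-1]? = some a then run w n + 1 else 0 := by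
  have h : (a :: w)[n]? = w[n-1]? := by
    obtain ⟨m, rfl⟩ := Nat.exists_eq_add_of_le hn
    simp [List.getElem?_cons_succ, Nat.add_comm]
  rw [run, h]

lemma run_nil (n : ℕ) : run [] n = 0 := rfl

lemma good_nil (t : ℕ → ℕ) (ht : ∀ n, 1 ≤ n → 1 ≤ t n) : Good t [] := by
  intro s n hn
  have := ht n hn
  simp [run_nil]
  omega

lemma good_tail {t : ℕ → ℕ} {a : ℕ} {w : List ℕ} (h : Good t (a :: w)) : Good t w := by
  intro s n hn
  have := h (s+1) n hn
  simpa using this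

lemma good_run_lt {t : ℕ → ℕ} {w : List ℕ} (h : Good t w) (n : ℕ) (hn : 1 ≤ n) :
    run w n < t n := by simpa using h 0 n hn

lemma good_cons {t : ℕ → ℕ} {a : ℕ} {w : List ℕ} (hw : Good t w)
    (h : ∀ n, 1 ≤ n → ¬(w[n-1]? = some a ∧ run w n + 1 = t n)) : Good t (a :: w) := by
  intro s n hn
  match s with
  | s + 1 => simpa using hw s n hn
  | 0 =>
    simp only [List.drop_zero]
    rw [run_cons a w n hn]
    by_cases hm : w[n-1]? = some a
    · rw [if_pos hm]
      have h1 := good_run_lt hw n hn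
      have h3 : run w n + 1 ≠ t n := fun he => (h n hn) ⟨hm, he⟩
      omega
    · rw [if_neg hm]
      have h1 := good_run_lt hw n hn
      omega

/-- if the first `c` period-`n` matches hold, the run is at least `c`. -/
lemma le_run (n : ℕ) : ∀ (c : ℕ) (w : List ℕ),
    (∀ q, q < c → q + n < w.length ∧ w[q + n]? = w[q]?) → c ≤ run w n := by
  intro c
  induction c with
  | zero => intro w _; exact Nat.zero_le _
  | succ c ih =>
    intro w h
    match w with
    | [] =>
      have := (h 0 (Nat.succ_pos c)).1
      simp at this
    | a :: w' =>
      have h0 := h 0 (Nat.succ_pos c)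
      have hmatch : (a :: w')[n]? = some a := by
        have := h0.2
        simpa using this
      rw [run, if_pos hmatch]
      have : c ≤ run w' n := by
        apply ih
        intro q hq
        have hh := h (q+1) (by omega)
        constructor
        · have := hh.1; simp at this; omega
        · have := hh.2
          rw [show q + 1 + n = (q + n) + 1 by omega] at this
          simpa using this
      omega

lemma psi_nonneg (t : ℕ → ℕ) (w : List ℕ) : 0 ≤ psi t w := by
  apply Finset.sum_nonneg
  intro n _
  by_cases h : 2 ≤ t n
  · rw [if_pos h]
    have h1 : (1:ℝ) ≤ (2:ℝ) ^ (run w n) := one_le_pow₀ (by norm_num)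
    have h2 : (0:ℝ) ≤ (2:ℝ) ^ (-(t n : ℤ)) := by positivity
    nlinarith
  · rw [if_neg h]



lemma geo2 (M : ℕ) : (∑ j ∈ Finset.Icc 2 M, (2:ℝ) ^ (-(j:ℤ))) ≤ 1/2 := by
  have key : ∀ M : ℕ, 1 ≤ M →
      (∑ j ∈ Finset.Icc 2 M, (2:ℝ) ^ (-(j:ℤ))) ≤ 1/2 - (2:ℝ)^(-(M:ℤ)) := by
    intro M
    induction M with
    | zero => intro h; omega
    | succ M ih =>
      intro _
      by_cases hM : 1 ≤ M
      · rw [Finset.sum_Icc_succ_top (by omega)]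
        have h2 : ((M:ℤ)+1) = ((M+1:ℕ):ℤ) := by push_cast; ring
        have hstep : (2:ℝ)^(-((M+1:ℕ):ℤ)) = (2:ℝ)^(-(M:ℤ)) / 2 := by
          rw [← h2, neg_add, zpow_add₀ (by norm_num : (2:ℝ) ≠ 0)]
          norm_num
          ring
        calc (∑ j ∈ Finset.Icc 2 M, (2:ℝ) ^ (-(j:ℤ))) + (2:ℝ)^(-((M+1:ℕ):ℤ))
            ≤ (1/2 - (2:ℝ)^(-(M:ℤ))) + (2:ℝ)^(-(M:ℤ))/2 := by
              rw [hstep]; linarith [ih hM]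
          _ = 1/2 - (2:ℝ)^(-((M+1:ℕ):ℤ)) := by rw [hstep]; ring
      · have : M = 0 := by omega
        subst this
        norm_num
  by_cases hM : 1 ≤ M
  · have := key M hM
    have hpos : (0:ℝ) < (2:ℝ)^(-(M:ℤ)) := by positivity
    linarith
  · have : M = 0 := by omega
    subst this
    norm_num



lemma zpow_anti {m n : ℤ} (h : m ≤ n) : (2:ℝ)^m ≤ (2:ℝ)^n := by
  gcongr
  norm_num

/-- number of "always ready" periods -/
def kone (t : ℕ → ℕ) (k : ℕ) : ℕ := ((Finset.Icc 1 k).filter (fun n => t n = 1)).card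

lemma kone_le (t : ℕ → ℕ) (k : ℕ) : kone t k ≤ k := by
  have := Finset.card_filter_le (Finset.Icc 1 k) (fun n => t n = 1)
  simpa [kone, Nat.card_Icc] using this

lemma t_pos {t : ℕ → ℕ} {k : ℕ} (hk : ∀ n, 1 ≤ n → n ≤ k * t n) {n : ℕ} (hn : 1 ≤ n) :
    1 ≤ t n := by
  by_contra h
  have h0 : t n = 0 := by omega
  have := hk n hn
  rw [h0] at this
  omega

lemma Bbound (t : ℕ → ℕ) (k : ℕ) (hk1 : 1 ≤ k) (hk : ∀ n, 1 ≤ n → n ≤ k * t n) (len : ℕ) :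
    ∑ n ∈ (Finset.Icc 1 len).filter (fun n => 2 ≤ t n), (2:ℝ)^(-(t n:ℤ))
      ≤ ((k:ℝ) - kone t k)/4 + k/2 := by
  classical
  set F := (Finset.Icc 1 len).filter (fun n => 2 ≤ t n) with hF
  have hsplit := Finset.sum_filter_add_sum_filter_not F (fun n => n ≤ k)
      (fun n => (2:ℝ)^(-(t n:ℤ)))
  -- part 1 : n ≤ k
  have hpart1 : ∑ n ∈ F.filter (fun n => n ≤ k), (2:ℝ)^(-(t n:ℤ))
      ≤ ((k:ℝ) - kone t k)/4 := by
    have hsub : F.filter (fun n => n ≤ k) ⊆ (Finset.Icc 1 k).filter (fun n => 2 ≤ t n) := by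
      intro n hn
      simp only [hF, Finset.mem_filter, Finset.mem_Icc] at hn ⊢
      exact ⟨⟨hn.1.1.1, hn.2⟩, hn.1.2⟩
    have hcard2 : ((Finset.Icc 1 k).filter (fun n => 2 ≤ t n)).card = k - kone t k := by
      have hpart := Finset.card_filter_add_card_filter_not
        (s := Finset.Icc 1 k) (fun n => t n = 1)
      have hcongr : (Finset.Icc 1 k).filter (fun n => ¬ t n = 1)
          = (Finset.Icc 1 k).filter (fun n => 2 ≤ t n) := by
        apply Finset.filter_congr
        intro n hn
        simp only [Finset.mem_Icc] at hn
        have := t_pos hk hn.1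
        omega
      rw [hcongr] at hpart
      have : kone t k ≤ k := kone_le t k
      simp only [Nat.card_Icc] at hpart
      unfold kone
      omega
    have hcardle : (F.filter (fun n => n ≤ k)).card ≤ k - kone t k := by
      calc (F.filter (fun n => n ≤ k)).card
          ≤ ((Finset.Icc 1 k).filter (fun n => 2 ≤ t n)).card := Finset.card_le_card hsub
        _ = k - kone t k := hcard2
    have hterm : ∀ n ∈ F.filter (fun n => n ≤ k), (2:ℝ)^(-(t n:ℤ)) ≤ 1/4 := by
      intro n hn
      simp only [hF, Finset.mem_filter] at hn
      have h2 : 2 ≤ t n := hn.1.2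
      have : (2:ℝ)^(-(t n:ℤ)) ≤ (2:ℝ)^(-(2:ℤ)) := by
        apply zpow_anti; omega
      simpa using this.trans (by norm_num)
    calc ∑ n ∈ F.filter (fun n => n ≤ k), (2:ℝ)^(-(t n:ℤ))
        ≤ (F.filter (fun n => n ≤ k)).card • (1/4 : ℝ) :=
          Finset.sum_le_card_nsmul _ _ _ hterm
      _ = ((F.filter (fun n => n ≤ k)).card : ℝ) * (1/4) := by
          rw [nsmul_eq_mul]
      _ ≤ ((k - kone t k : ℕ) : ℝ) * (1/4) := by
          apply mul_le_mul_of_nonneg_right _ (by norm_num)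
          exact_mod_cast hcardle
      _ = ((k:ℝ) - kone t k)/4 := by
          have h1 : kone t k ≤ k := kone_le t k
          push_cast [h1]
          try ring
  -- part 2 : n > k
  have hpart2 : ∑ n ∈ F.filter (fun n => ¬ n ≤ k), (2:ℝ)^(-(t n:ℤ)) ≤ (k:ℝ)/2 := by
    set F2 := F.filter (fun n => ¬ n ≤ k) with hF2
    set g : ℕ → ℕ := fun n => (n-1)/k + 1 with hg
    have hmaps : ∀ n ∈ F2, g n ∈ Finset.Icc 2 len := by
      intro n hn
      simp only [hF2, hF, Finset.mem_filter, Finset.mem_Icc] at hn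
      obtain ⟨⟨⟨hn1, hnlen⟩, _⟩, hnk⟩ := hn
      simp only [Finset.mem_Icc, hg]
      constructor
      · have : 1 ≤ (n-1)/k := Nat.le_div_iff_mul_le (by omega) |>.mpr (by omega)
        omega
      · have : (n-1)/k ≤ n - 1 := Nat.div_le_self _ _
        omega
    have hfiber := Finset.sum_fiberwise_of_maps_to hmaps (fun n => (2:ℝ)^(-(t n:ℤ)))
    rw [← hfiber]
    have hfib_le : ∀ j ∈ Finset.Icc 2 len,
        ∑ n ∈ F2.filter (fun n => g n = j), (2:ℝ)^(-(t n:ℤ)) ≤ (k:ℝ) * (2:ℝ)^(-(j:ℤ)) := by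
      intro j hj
      have hcard : (F2.filter (fun n => g n = j)).card ≤ k := by
        have hsub : F2.filter (fun n => g n = j) ⊆ Finset.Icc (k*(j-1)+1) (k*j) := by
          intro n hn
          simp only [hF2, hF, Finset.mem_filter, Finset.mem_Icc, hg] at hn ⊢
          obtain ⟨⟨⟨⟨hn1, _⟩, _⟩, hnk⟩, hgn⟩ := hn
          have hdm := Nat.div_add_mod (n-1) k
          have hmod : (n-1) % k < k := Nat.mod_lt _ (by omega)
          simp only [Finset.mem_Icc] at hj
          rw [show (n-1)/k = j - 1 by omega] at hdm
          have hkj : k*(j-1) + k = k*j := by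
            rw [← Nat.mul_succ]
            congr 1
            omega
          omega
        calc (F2.filter (fun n => g n = j)).card
            ≤ (Finset.Icc (k*(j-1)+1) (k*j)).card := Finset.card_le_card hsub
          _ ≤ k := by
              rw [Nat.card_Icc]
              simp only [Finset.mem_Icc] at hj
              have : 1 ≤ j := by omega
              calc k*j + 1 - (k*(j-1)+1) = k*j - k*(j-1) := by omega
                _ ≤ k := by
                    have : k*(j-1) + k = k*j := by
                      rw [← Nat.mul_succ]
                      congr 1
                      omega
                    omega
      have hterm : ∀ n ∈ F2.filter (fun n => g n = j), (2:ℝ)^(-(t n:ℤ)) ≤ (2:ℝ)^(-(j:ℤ)) := by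
        intro n hn
        simp only [hF2, hF, Finset.mem_filter, Finset.mem_Icc, hg] at hn
        obtain ⟨⟨⟨⟨hn1, _⟩, _⟩, hnk⟩, hgn⟩ := hn
        have htn : j ≤ t n := by
          by_contra hcon
          have h1 : t n ≤ (n-1)/k := by omega
          have h2 : k * t n ≤ k * ((n-1)/k) := Nat.mul_le_mul_left _ h1
          have h3 : k * ((n-1)/k) ≤ n - 1 := Nat.mul_div_le _ _
          have h4 := hk n (by omega)
          omega
        apply zpow_anti; omega
      calc ∑ n ∈ F2.filter (fun n => g n = j), (2:ℝ)^(-(t n:ℤ))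
          ≤ (F2.filter (fun n => g n = j)).card • (2:ℝ)^(-(j:ℤ)) :=
            Finset.sum_le_card_nsmul _ _ _ hterm
        _ = ((F2.filter (fun n => g n = j)).card : ℝ) * (2:ℝ)^(-(j:ℤ)) := nsmul_eq_mul _ _
        _ ≤ (k:ℝ) * (2:ℝ)^(-(j:ℤ)) := by
            apply mul_le_mul_of_nonneg_right _ (by positivity)
            exact_mod_cast hcard
    calc ∑ j ∈ Finset.Icc 2 len, ∑ n ∈ F2.filter (fun n => g n = j), (2:ℝ)^(-(t n:ℤ))
        ≤ ∑ j ∈ Finset.Icc 2 len, (k:ℝ) * (2:ℝ)^(-(j:ℤ)) := Finset.sum_le_sum hfib_le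
      _ = (k:ℝ) * ∑ j ∈ Finset.Icc 2 len, (2:ℝ)^(-(j:ℤ)) := by rw [Finset.mul_sum]
      _ ≤ (k:ℝ) * (1/2) := by
          have := geo2 len
          have hknn : (0:ℝ) ≤ k := by positivity
          nlinarith
      _ = (k:ℝ)/2 := by ring
  linarith [hsplit, hpart1, hpart2]


theorem extend (t : ℕ → ℕ) (k : ℕ) (hk1 : 1 ≤ k) (hk : ∀ n, 1 ≤ n → n ≤ k * t n)
    (w : List ℕ) (hg : Good t w) (hp : psi t w ≤ 1/2)
    (L : Finset ℕ) (hL : 4 * k ≤ L.card) :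
    ∃ a ∈ L, Good t (a :: w) ∧ psi t (a :: w) ≤ 1/2 := by
  classical
  set len := w.length with hlen
  set I := Finset.Icc 1 len with hI
  set RS := I.filter (fun n => 2 ≤ t n ∧ run w n + 1 = t n) with hRS
  set bad := (I.filter (fun n => run w n + 1 = t n)).image (fun n => w.getD (n-1) 0) with hbad
  set good := L \ bad with hgood
  have hk1le : kone t k ≤ k := kone_le t k
  -- value of a ready term
  have hterm_ready : ∀ n ∈ RS,
      ((2:ℝ) ^ (run w n) - 1) * (2:ℝ) ^ (-(t n : ℤ)) = 1/2 - (2:ℝ)^(-(t n:ℤ)) := by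
    intro n hn
    simp only [hRS, Finset.mem_filter] at hn
    obtain ⟨-, h2, hr⟩ := hn
    have hrun : run w n = t n - 1 := by omega
    rw [hrun]
    have hcast : ((t n - 1 : ℕ) : ℤ) = (t n : ℤ) - 1 := by
      push_cast [show 1 ≤ t n by omega]; ring
    have hpow : ((2:ℝ) ^ (t n - 1 : ℕ)) = (2:ℝ) ^ ((t n : ℤ) - 1) := by
      rw [← zpow_natCast, hcast]
    rw [hpow, sub_mul, ← zpow_add₀ (by norm_num : (2:ℝ) ≠ 0)]
    rw [show (t n:ℤ) - 1 + -(t n:ℤ) = -1 by ring]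
    norm_num
  have hterm_ready_ge : ∀ n ∈ RS,
      (1/4 : ℝ) ≤ ((2:ℝ) ^ (run w n) - 1) * (2:ℝ) ^ (-(t n : ℤ)) := by
    intro n hn
    rw [hterm_ready n hn]
    have h2 : 2 ≤ t n := by
      simp only [hRS, Finset.mem_filter] at hn; exact hn.2.1
    have hz : (2:ℝ)^(-(t n:ℤ)) ≤ (2:ℝ)^(-(2:ℤ)) := zpow_anti (by omega)
    have hle : (2:ℝ)^(-(t n:ℤ)) ≤ 1/4 := le_trans hz (by norm_num)
    linarith
  set RM := ∑ n ∈ RS, ((2:ℝ) ^ (run w n) - 1) * (2:ℝ) ^ (-(t n : ℤ)) with hRMdef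
  have hRM_ge : (RS.card : ℝ) * (1/4) ≤ RM := by
    rw [hRMdef]
    calc (RS.card : ℝ) * (1/4) = RS.card • (1/4 : ℝ) := (nsmul_eq_mul _ _).symm
      _ ≤ ∑ n ∈ RS, ((2:ℝ) ^ (run w n) - 1) * (2:ℝ) ^ (-(t n : ℤ)) :=
          Finset.card_nsmul_le_sum _ _ _ hterm_ready_ge
  have hRM_le_psi : RM ≤ psi t w := by
    rw [hRMdef, psi]
    rw [Finset.sum_congr rfl (fun n hn => by
      simp only [hRS, Finset.mem_filter] at hn
      rw [if_pos hn.2.1] :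
        ∀ n ∈ RS, ((2:ℝ) ^ (run w n) - 1) * (2:ℝ) ^ (-(t n : ℤ))
          = if 2 ≤ t n then ((2:ℝ) ^ (run w n) - 1) * (2:ℝ) ^ (-(t n : ℤ)) else 0)]
    apply Finset.sum_le_sum_of_subset_of_nonneg
    · rw [hRS, hI, hlen]; exact Finset.filter_subset _ _
    · intro n _ _
      by_cases h : 2 ≤ t n
      · rw [if_pos h]
        have h1 : (1:ℝ) ≤ (2:ℝ) ^ (run w n) := one_le_pow₀ (by norm_num)
        have h2 : (0:ℝ) ≤ (2:ℝ) ^ (-(t n : ℤ)) := by positivity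
        nlinarith
      · rw [if_neg h]
  have hR2 : RS.card ≤ 2 := by
    have hh : (RS.card : ℝ) * (1/4) ≤ 1/2 := le_trans hRM_ge (le_trans hRM_le_psi hp)
    by_contra hcon
    have h3 : (3:ℝ) ≤ (RS.card : ℝ) := by exact_mod_cast (by omega : 3 ≤ RS.card)
    linarith
  -- bad card
  have hbadcard : bad.card ≤ kone t k + RS.card := by
    have h1 : bad.card ≤ (I.filter (fun n => run w n + 1 = t n)).card := Finset.card_image_le
    have h2 := Finset.card_filter_add_card_filter_not
      (s := I.filter (fun n => run w n + 1 = t n)) (fun n => t n = 1)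
    have h3 : ((I.filter (fun n => run w n + 1 = t n)).filter (fun n => t n = 1)).card
        ≤ kone t k := by
      unfold kone
      apply Finset.card_le_card
      intro n hn
      simp only [Finset.mem_filter, hI, Finset.mem_Icc] at hn
      obtain ⟨⟨⟨h1n, _⟩, _⟩, ht1⟩ := hn
      have hnk : n ≤ k := by
        have := hk n h1n
        rw [ht1] at this
        omega
      simp only [Finset.mem_filter, Finset.mem_Icc]
      exact ⟨⟨h1n, hnk⟩, ht1⟩
    have h4 : ((I.filter (fun n => run w n + 1 = t n)).filter (fun n => ¬ t n = 1)).card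
        ≤ RS.card := by
      apply Finset.card_le_card
      intro n hn
      simp only [Finset.mem_filter, hI, Finset.mem_Icc] at hn
      obtain ⟨⟨⟨h1n, h2n⟩, hready⟩, ht1⟩ := hn
      have := t_pos hk h1n
      simp only [hRS, Finset.mem_filter, hI, Finset.mem_Icc]
      exact ⟨⟨h1n, h2n⟩, by omega, hready⟩
    omega
  have hgoodsub : good ⊆ L := Finset.sdiff_subset
  have hmemgood : ∀ a ∈ good, a ∉ bad := by
    intro a ha; simp only [hgood, Finset.mem_sdiff] at ha; exact ha.2
  have hGoodext : ∀ a ∈ good, Good t (a :: w) := by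
    intro a ha
    apply good_cons hg
    intro n hn hcon
    obtain ⟨hm, hr⟩ := hcon
    obtain ⟨hlt, heq⟩ := List.getElem?_eq_some_iff.mp hm
    have hnI : n ∈ I := by
      simp only [hI, Finset.mem_Icc]
      rw [← hlen] at hlt
      omega
    have hgetD : w.getD (n-1) 0 = a := by
      rw [List.getD_eq_getElem w 0 hlt, heq]
    have habad : a ∈ bad := by
      rw [hbad]
      apply Finset.mem_image.mpr
      exact ⟨n, Finset.mem_filter.mpr ⟨hnI, hr⟩, hgetD⟩
    exact hmemgood a ha habad
  have hcard_chain : 4 * k ≤ good.card + (kone t k + RS.card) := by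
    have h1 : L.card ≤ good.card + bad.card := by
      rw [hgood]; exact Finset.card_le_card_sdiff_add_card
    omega
  have hgood_ne : good.Nonempty := by
    rw [← Finset.card_pos]
    omega
  -- per-color formula for psi (a :: w)
  have hpsiform : ∀ a : ℕ, psi t (a :: w) =
      ∑ n ∈ I, (if 2 ≤ t n ∧ w[n-1]? = some a
        then ((2:ℝ) ^ (run w n + 1) - 1) * (2:ℝ) ^ (-(t n : ℤ)) else 0) := by
    intro a
    rw [psi]
    rw [show (a :: w).length = len + 1 by rw [List.length_cons, ← hlen]]
    rw [Finset.sum_Icc_succ_top (by omega)]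
    have hnone : w[len+1-1]? = none := by
      apply List.getElem?_eq_none
      rw [← hlen]
      omega
    have hlast : (if 2 ≤ t (len+1)
        then ((2:ℝ) ^ (run (a::w) (len+1)) - 1) * (2:ℝ) ^ (-(t (len+1) : ℤ)) else 0) = 0 := by
      rw [run_cons a w (len+1) (by omega), hnone]
      by_cases h2 : 2 ≤ t (len+1)
      · rw [if_pos h2, if_neg (by simp : ¬((none : Option ℕ) = some a))]
        simp
      · rw [if_neg h2]
    rw [hlast, add_zero, ← hI]
    apply Finset.sum_congr rfl
    intro n hn
    have hn1 : 1 ≤ n := by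
      simp only [hI, Finset.mem_Icc] at hn; exact hn.1
    rw [run_cons a w n hn1]
    by_cases hm : w[n-1]? = some a
    · rw [if_pos hm]
      by_cases h2 : 2 ≤ t n
      · rw [if_pos h2, if_pos ⟨h2, hm⟩]
      · rw [if_neg h2, if_neg (by tauto)]
    · rw [if_neg hm]
      by_cases h2 : 2 ≤ t n
      · rw [if_pos h2, if_neg (by tauto)]
        simp
      · rw [if_neg h2, if_neg (by tauto)]
  set C : ℕ → ℝ := fun n => ((2:ℝ) ^ (run w n + 1) - 1) * (2:ℝ) ^ (-(t n : ℤ)) with hC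
  have hCnonneg : ∀ n, 0 ≤ C n := by
    intro n
    simp only [hC]
    have h1 : (1:ℝ) ≤ (2:ℝ) ^ (run w n + 1) := one_le_pow₀ (by norm_num)
    have h2 : (0:ℝ) ≤ (2:ℝ) ^ (-(t n : ℤ)) := by positivity
    nlinarith
  have hsum_swap : ∑ a ∈ good, psi t (a :: w)
      = ∑ n ∈ I, ∑ a ∈ good, (if 2 ≤ t n ∧ w[n-1]? = some a then C n else 0) := by
    rw [Finset.sum_congr rfl (fun a _ => hpsiform a)]
    exact Finset.sum_comm
  have hinner : ∀ n ∈ I, (∑ a ∈ good, if 2 ≤ t n ∧ w[n-1]? = some a then C n else 0)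
      ≤ (if 2 ≤ t n ∧ ¬(run w n + 1 = t n) then C n else 0) := by
    intro n hn
    have hn1 : 1 ≤ n ∧ n ≤ len := by simpa [hI, Finset.mem_Icc] using hn
    have hlt : n - 1 < w.length := by rw [← hlen]; omega
    set c := w.getD (n-1) 0 with hc
    have hsome : w[n-1]? = some c := by
      rw [List.getElem?_eq_getElem hlt, hc, List.getD_eq_getElem w 0 hlt]
    have hcond : ∀ a : ℕ, (2 ≤ t n ∧ w[n-1]? = some a) ↔ (2 ≤ t n ∧ a = c) := by
      intro a
      rw [hsome]
      constructor
      · rintro ⟨h2, hsa⟩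
        exact ⟨h2, (Option.some_injective _ hsa).symm⟩
      · rintro ⟨h2, rfl⟩
        exact ⟨h2, rfl⟩
    rw [Finset.sum_congr rfl (fun a _ => by rw [if_congr (hcond a) rfl rfl])]
    by_cases h2 : 2 ≤ t n
    · rw [Finset.sum_congr rfl (fun a _ => by
        by_cases hac : a = c
        · rw [if_pos ⟨h2, hac⟩, if_pos hac]
        · rw [if_neg (by tauto), if_neg hac] :
          ∀ a ∈ good, (if 2 ≤ t n ∧ a = c then C n else 0) = (if a = c then C n else 0))]
      rw [Finset.sum_ite_eq' good c (fun _ => C n)]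
      by_cases hcg : c ∈ good
      · rw [if_pos hcg]
        have hnready : ¬(run w n + 1 = t n) := by
          intro hr
          have hcbad : c ∈ bad := by
            rw [hbad]
            apply Finset.mem_image.mpr
            exact ⟨n, Finset.mem_filter.mpr ⟨hn, hr⟩, rfl⟩
          exact hmemgood c hcg hcbad
        rw [if_pos ⟨h2, hnready⟩]
      · rw [if_neg hcg]
        by_cases hr : run w n + 1 = t n
        · rw [if_neg (by tauto)]
        · rw [if_pos ⟨h2, hr⟩]
          exact hCnonneg n
    · rw [if_neg (by tauto)]
      apply le_of_eq
      apply Finset.sum_eq_zero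
      intro a _
      rw [if_neg (by tauto)]
  set T := ∑ n ∈ I, (if 2 ≤ t n ∧ ¬(run w n + 1 = t n) then C n else 0) with hT
  have hS_le_T : ∑ a ∈ good, psi t (a :: w) ≤ T := by
    rw [hsum_swap, hT]
    exact Finset.sum_le_sum hinner
  set B := ∑ n ∈ I.filter (fun n => 2 ≤ t n), (2:ℝ)^(-(t n:ℤ)) with hB
  have hT_le : T ≤ 2*(psi t w) - 2*RM + B := by
    have hTf : T = ∑ n ∈ I.filter (fun n => 2 ≤ t n ∧ ¬(run w n + 1 = t n)), C n := by
      rw [hT, Finset.sum_filter]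
    have hCsplit : ∀ n, C n
        = 2*(((2:ℝ) ^ (run w n) - 1) * (2:ℝ) ^ (-(t n : ℤ))) + (2:ℝ) ^ (-(t n : ℤ)) := by
      intro n
      simp only [hC]
      rw [pow_succ]
      ring
    have hpsif : psi t w = ∑ n ∈ I.filter (fun n => 2 ≤ t n),
        ((2:ℝ) ^ (run w n) - 1) * (2:ℝ) ^ (-(t n : ℤ)) := by
      rw [psi, ← hlen, ← hI, Finset.sum_filter]
    have hsplit2 := Finset.sum_filter_add_sum_filter_not (I.filter (fun n => 2 ≤ t n))
      (fun n => run w n + 1 = t n)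
      (fun n => ((2:ℝ) ^ (run w n) - 1) * (2:ℝ) ^ (-(t n : ℤ)))
    have hff1 : (I.filter (fun n => 2 ≤ t n)).filter (fun n => run w n + 1 = t n) = RS := by
      rw [Finset.filter_filter, hRS]
    have hff2 : (I.filter (fun n => 2 ≤ t n)).filter (fun n => ¬(run w n + 1 = t n))
        = I.filter (fun n => 2 ≤ t n ∧ ¬(run w n + 1 = t n)) := by
      rw [Finset.filter_filter]
    rw [hff1, hff2] at hsplit2
    have hmain : ∑ n ∈ I.filter (fun n => 2 ≤ t n ∧ ¬(run w n + 1 = t n)),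
        ((2:ℝ) ^ (run w n) - 1) * (2:ℝ) ^ (-(t n : ℤ)) = psi t w - RM := by
      rw [hpsif, hRMdef]
      linarith [hsplit2]
    have hbase : ∑ n ∈ I.filter (fun n => 2 ≤ t n ∧ ¬(run w n + 1 = t n)),
        (2:ℝ) ^ (-(t n : ℤ)) ≤ B := by
      rw [hB]
      apply Finset.sum_le_sum_of_subset_of_nonneg
      · rw [← hff2]
        exact Finset.filter_subset _ _
      · intro n _ _
        positivity
    calc T = ∑ n ∈ I.filter (fun n => 2 ≤ t n ∧ ¬(run w n + 1 = t n)), C n := hTf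
      _ = 2*(∑ n ∈ I.filter (fun n => 2 ≤ t n ∧ ¬(run w n + 1 = t n)),
            ((2:ℝ) ^ (run w n) - 1) * (2:ℝ) ^ (-(t n : ℤ)))
          + ∑ n ∈ I.filter (fun n => 2 ≤ t n ∧ ¬(run w n + 1 = t n)),
            (2:ℝ) ^ (-(t n : ℤ)) := by
          rw [Finset.sum_congr rfl (fun n _ => hCsplit n), Finset.sum_add_distrib,
            Finset.mul_sum]
      _ ≤ 2*(psi t w - RM) + B := by
          rw [hmain]
          linarith [hbase]
      _ = 2*(psi t w) - 2*RM + B := by ring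
  -- final contradiction
  by_contra hcon
  push_neg at hcon
  have hbig : ∀ a ∈ good, 1/2 < psi t (a :: w) := by
    intro a ha
    have hG := hGoodext a ha
    have hna := hcon a (hgoodsub ha)
    by_contra hle
    push_neg at hle
    exact (hna hG).not_ge hle
  have hsum_lt : (good.card : ℝ) * (1/2) < ∑ a ∈ good, psi t (a :: w) := by
    have hlt := Finset.sum_lt_sum_of_nonempty hgood_ne hbig
    calc (good.card : ℝ) * (1/2) = ∑ _a ∈ good, (1/2:ℝ) := by
          rw [Finset.sum_const, nsmul_eq_mul]
      _ < ∑ a ∈ good, psi t (a :: w) := hlt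
  have hBb : B ≤ ((k:ℝ) - kone t k)/4 + k/2 := by
    rw [hB, hI, hlen]
    exact Bbound t k hk1 hk w.length
  have hcardR : (4*k : ℝ) ≤ (good.card:ℝ) + ((kone t k : ℝ) + RS.card) := by
    exact_mod_cast hcard_chain
  have hR2R : (RS.card : ℝ) ≤ 2 := by exact_mod_cast hR2
  have hkoneR : (kone t k : ℝ) ≤ k := by exact_mod_cast hk1le
  have hkR : (1:ℝ) ≤ k := by exact_mod_cast hk1
  linarith

/-- the threshold function determined by `r = 1 + ε`. -/
noncomputable def tfun (ε : ℝ) : ℕ → ℕ :=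
  fun n => (⌊1+ε⌋₊ - 1) * n + ⌈Int.fract (1+ε) * (n:ℝ)⌉₊

lemma tfun_floor_ge (ε : ℝ) (hε : 0 < ε) : 1 ≤ ⌊1+ε⌋₊ := by
  rw [Nat.le_floor_iff (by linarith)]
  push_cast
  linarith

lemma tfun_real_ge (ε : ℝ) (hε : 0 < ε) (n : ℕ) : ε * n ≤ (tfun ε n : ℝ) := by
  have hb : 1 ≤ ⌊1+ε⌋₊ := tfun_floor_ge ε hε
  have hfloor : ((⌊1+ε⌋₊ : ℝ)) = (⌊(1+ε : ℝ)⌋ : ℝ) := by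
    exact_mod_cast congrArg (Int.cast : ℤ → ℝ) (Int.natCast_floor_eq_floor (by linarith : (0:ℝ) ≤ 1+ε))
  have hfract : (1+ε) - (⌊(1+ε : ℝ)⌋ : ℝ) = Int.fract (1+ε) := Int.self_sub_floor (1+ε)
  have hkey : ε = ((⌊1+ε⌋₊ : ℝ) - 1) + Int.fract (1+ε) := by
    rw [hfloor]
    linarith
  have hcast : ((((⌊1+ε⌋₊ : ℕ) - 1) * n : ℕ) : ℝ) = ((⌊1+ε⌋₊ : ℝ) - 1) * n := by
    push_cast [hb]
    ring
  have hceil : Int.fract (1+ε) * (n:ℝ) ≤ (⌈Int.fract (1+ε) * (n:ℝ)⌉₊ : ℝ) := Nat.le_ceil _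
  have htf : (tfun ε n : ℝ) = ((⌊1+ε⌋₊ : ℝ) - 1) * n + (⌈Int.fract (1+ε) * (n:ℝ)⌉₊ : ℝ) := by
    rw [tfun]
    push_cast [hb]
    ring
  have h5 : ε * n = ((⌊1+ε⌋₊:ℝ) - 1)*n + Int.fract (1+ε) * n := by
    linear_combination (n:ℝ) * hkey
  rw [htf]
  linarith

lemma tfun_spec (ε : ℝ) (hε : 0 < ε) : ∀ n, 1 ≤ n → n ≤ (⌈1/ε⌉₊) * tfun ε n := by
  intro n hn
  set k := ⌈1/ε⌉₊ with hkdef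
  have hk : 1/ε ≤ (k:ℝ) := Nat.le_ceil _
  have hek : 1 ≤ ε * k := by
    rw [div_le_iff₀ hε] at hk
    linarith [mul_comm ε (k:ℝ)]
  have h1 : (n:ℝ) ≤ (k:ℝ) * (tfun ε n : ℝ) := by
    have h2 : ε * n ≤ (tfun ε n : ℝ) := tfun_real_ge ε hε n
    have h3 : (n:ℝ) ≤ (ε * k) * n := by
      nlinarith [Nat.cast_nonneg (α := ℝ) n]
    have h4 : (ε * k) * n = (k:ℝ) * (ε * n) := by ring
    have h5 : (k:ℝ) * (ε * n) ≤ (k:ℝ) * (tfun ε n : ℝ) := by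
      apply mul_le_mul_of_nonneg_left h2 (Nat.cast_nonneg _)
    linarith
  exact_mod_cast h1

lemma prefix_aux (x tk : List ℕ) : ∀ c : ℕ,
    ((List.replicate c x).flatten ++ tk) <+: x ++ ((List.replicate c x).flatten ++ tk)
      ∨ True := by
  intro c; right; trivial

lemma prefix_key (x : List ℕ) (j : ℕ) : ∀ c : ℕ,
    ((List.replicate c x).flatten ++ x.take j)
      <+: x ++ ((List.replicate c x).flatten ++ x.take j) := by
  intro c
  induction c with
  | zero =>
    simp only [List.replicate, List.flatten_nil, List.nil_append]
    exact (List.take_prefix j x).trans (List.prefix_append x _)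
  | succ c ih =>
    obtain ⟨s, hs⟩ := ih
    rw [List.replicate_succ, List.flatten_cons, List.append_assoc]
    exact ⟨s, by rw [List.append_assoc, hs]⟩

lemma formpow_spec (ε : ℝ) (hε : 0 < ε) (l : List ℕ) (h : IsFormPow (1+ε) l) :
    ∃ n, 1 ≤ n ∧ l.length = n + tfun ε n ∧
      ∀ i, i + n < l.length → l[i]? = l[i+n]? := by
  obtain ⟨x, hx, hl⟩ := h
  set n := x.length with hn
  have hn1 : 1 ≤ n := by
    rw [hn]
    cases x with
    | nil => exact absurd rfl hx
    | cons a y => simp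
  set b := ⌊(1+ε : ℝ)⌋₊ with hb
  have hb1 : 1 ≤ b := tfun_floor_ge ε hε
  set c := ⌈Int.fract (1+ε) * (n:ℝ)⌉₊ with hc
  have hcn : c ≤ n := by
    rw [hc, Nat.ceil_le]
    have h1 : Int.fract (1+ε) < 1 := Int.fract_lt_one _
    have h2 : (0:ℝ) ≤ n := Nat.cast_nonneg _
    nlinarith [Int.fract_nonneg (1+ε : ℝ)]
  -- decompose
  have hrep : (List.replicate b x).flatten = x ++ (List.replicate (b-1) x).flatten := by
    conv_lhs => rw [show b = (b-1)+1 by omega]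
    rw [List.replicate_succ, List.flatten_cons]
  set l2 := (List.replicate (b-1) x).flatten ++ x.take c with hl2
  have hlx : l = x ++ l2 := by
    rw [hl, hrep, hl2, List.append_assoc]
  have hflatlen : ∀ m : ℕ, (List.replicate m x).flatten.length = m * n := by
    intro m
    rw [List.length_flatten, List.map_replicate, List.sum_replicate, smul_eq_mul, hn]
  have hl2len : l2.length = (b-1) * n + c := by
    rw [hl2, List.length_append, hflatlen, List.length_take]
    congr 1
    omega
  have hlen : l.length = n + tfun ε n := by
    rw [hlx, List.length_append, hl2len, ← hn]
    rw [tfun, ← hb, ← hc]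
    try ring
    try omega
  refine ⟨n, hn1, hlen, ?_⟩
  have hpre : l2 <+: l := by
    rw [hlx, hl2]
    exact prefix_key x c (b-1)
  obtain ⟨s, hs⟩ := hpre
  intro i hin
  have hll : l.length = x.length + l2.length := by
    rw [hlx, List.length_append]
  have hl2len' : l2.length = l.length - n := by
    rw [hn]
    omega
  have hiL : i < l2.length := by omega
  have e1 : l[i]? = l2[i]? := by
    conv_lhs => rw [← hs]
    rw [List.getElem?_append_left hiL]
  have e2 : l[i+n]? = l2[i]? := by
    rw [hlx]
    rw [List.getElem?_append_right (by omega : x.length ≤ i + n)]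
    congr 1
    omega
  rw [e1, e2]

lemma no_bad_factor (t : ℕ → ℕ) (W : List ℕ) (hW : Good t W) (j n : ℕ) (hn : 1 ≤ n)
    (D : List ℕ) (hD : D = W.reverse.drop j) (hlenD : D.length = n + t n)
    (hper : ∀ i, i + n < D.length → D[i]? = D[i+n]?) : False := by
  set m := n + t n with hm
  have htpos : 1 ≤ t n := by
    have := good_run_lt hW n hn
    omega
  have hm1 : 2 ≤ m := by omega
  have hWlen : D.length = W.length - j := by
    rw [hD, List.length_drop, List.length_reverse]
  have hjm : j + m = W.length := by omega
  have hDi : ∀ i, i < m → D[i]? = W[m - 1 - i]? := by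
    intro i hi
    rw [hD, List.getElem?_drop]
    rw [List.getElem?_reverse (by omega : j + i < W.length)]
    congr 1
    omega
  have hmatch : ∀ q, q < t n → q + n < W.length ∧ W[q + n]? = W[q]? := by
    intro q hq
    have hqn : q + n < m := by omega
    constructor
    · omega
    · have h1 := hper (m - 1 - n - q) (by omega)
      rw [hDi (m-1-n-q) (by omega), hDi (m-1-n-q+n) (by omega)] at h1
      rw [show m - 1 - (m-1-n-q) = q + n by omega, show m - 1 - (m-1-n-q+n) = q by omega] at h1
      exact h1
  have hge := le_run n (t n) W hmatch
  have hlt := good_run_lt hW n hn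
  omega

section Tree

open SimpleGraph

variable {V : Type} (G : SimpleGraph V) (root : V) (hT : G.IsTree)

noncomputable def thePath (v : V) : G.Walk root v := (hT.existsUnique_path root v).choose

lemma thePath_isPath (v : V) : (thePath G root hT v).IsPath :=
  (hT.existsUnique_path root v).choose_spec.1

lemma thePath_unique {v : V} (p : G.Walk root v) (hp : p.IsPath) : p = thePath G root hT v :=
  (hT.existsUnique_path root v).choose_spec.2 p hp

noncomputable def depth (v : V) : ℕ := (thePath G root hT v).length

lemma exists_parent (v : V) (hv : v ≠ root) : ∃ (x : V) (_ : G.Adj v x) (q : G.Walk x root),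
    (thePath G root hT v).reverse = SimpleGraph.Walk.cons ‹G.Adj v x› q := by
  obtain ⟨x, h, q, hq⟩ := SimpleGraph.Walk.exists_eq_cons_of_ne hv ((thePath G root hT v).reverse)
  exact ⟨x, h, q, hq⟩

noncomputable def parent (v : V) (hv : v ≠ root) : V := (exists_parent G root hT v hv).choose

noncomputable def parentAdj (v : V) (hv : v ≠ root) : G.Adj v (parent G root hT v hv) :=
  (exists_parent G root hT v hv).choose_spec.choose

noncomputable def parentWalk (v : V) (hv : v ≠ root) : G.Walk (parent G root hT v hv) root :=
  (exists_parent G root hT v hv).choose_spec.choose_spec.choose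

lemma parent_eq (v : V) (hv : v ≠ root) :
    (thePath G root hT v).reverse
      = SimpleGraph.Walk.cons (parentAdj G root hT v hv) (parentWalk G root hT v hv) :=
  (exists_parent G root hT v hv).choose_spec.choose_spec.choose_spec

lemma parentWalk_isPath (v : V) (hv : v ≠ root) : (parentWalk G root hT v hv).IsPath := by
  have h1 : (thePath G root hT v).reverse.IsPath := (thePath_isPath G root hT v).reverse
  rw [parent_eq G root hT v hv] at h1
  exact h1.of_cons

lemma parentWalk_reverse_eq (v : V) (hv : v ≠ root) :
    (parentWalk G root hT v hv).reverse = thePath G root hT (parent G root hT v hv) :=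
  thePath_unique G root hT _ (parentWalk_isPath G root hT v hv).reverse

lemma depth_parent_lt (v : V) (hv : v ≠ root) :
    depth G root hT (parent G root hT v hv) < depth G root hT v := by
  have h1 : (thePath G root hT v).reverse.length
      = (SimpleGraph.Walk.cons (parentAdj G root hT v hv) (parentWalk G root hT v hv)).length := by
    rw [parent_eq G root hT v hv]
  rw [SimpleGraph.Walk.length_reverse, SimpleGraph.Walk.length_cons] at h1
  have h2 : depth G root hT (parent G root hT v hv) = (parentWalk G root hT v hv).length := by
    rw [depth, ← parentWalk_reverse_eq G root hT v hv, SimpleGraph.Walk.length_reverse]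
  have h3 : depth G root hT v = (parentWalk G root hT v hv).length + 1 := by
    rw [depth]
    omega
  rw [h2, h3]
  omega

lemma thePath_support_eq (v : V) (hv : v ≠ root) :
    (thePath G root hT v).support
      = (thePath G root hT (parent G root hT v hv)).support ++ [v] := by
  have h1 : thePath G root hT v
      = (SimpleGraph.Walk.cons (parentAdj G root hT v hv) (parentWalk G root hT v hv)).reverse := by
    rw [← parent_eq G root hT v hv, SimpleGraph.Walk.reverse_reverse]
  rw [h1, SimpleGraph.Walk.support_reverse, SimpleGraph.Walk.support_cons,
    ← parentWalk_reverse_eq G root hT v hv, SimpleGraph.Walk.support_reverse]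
  simp

lemma thePath_root : thePath G root hT root = SimpleGraph.Walk.nil := by
  exact (thePath_unique G root hT SimpleGraph.Walk.nil (by simp)).symm

variable (t : ℕ → ℕ) (L : V → Finset ℕ)

open scoped Classical in
noncomputable def pick (w : List ℕ) (Lv : Finset ℕ) : ℕ :=
  if h : ∃ a ∈ Lv, Good t (a :: w) ∧ psi t (a :: w) ≤ 1/2 then h.choose else 0

lemma pick_spec (w : List ℕ) (Lv : Finset ℕ)
    (h : ∃ a ∈ Lv, Good t (a :: w) ∧ psi t (a :: w) ≤ 1/2) :
    pick t w Lv ∈ Lv ∧ Good t (pick t w Lv :: w) ∧ psi t (pick t w Lv :: w) ≤ 1/2 := by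
  rw [pick, dif_pos h]
  exact ⟨h.choose_spec.1, h.choose_spec.2.1, h.choose_spec.2.2⟩

open scoped Classical in
noncomputable def F (v : V) : List ℕ :=
  if hv : v = root then [pick t [] (L v)]
  else pick t (F (parent G root hT v hv)) (L v) :: F (parent G root hT v hv)
termination_by depth G root hT v
decreasing_by exact depth_parent_lt G root hT v hv

lemma psi_nil : psi t [] = 0 := by
  rw [psi]
  simp

lemma F_invariant (k : ℕ) (hk1 : 1 ≤ k) (hk : ∀ n, 1 ≤ n → n ≤ k * t n)
    (hL : ∀ v : V, 4 * k ≤ (L v).card) :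
    ∀ (N : ℕ) (v : V), depth G root hT v ≤ N →
      Good t (F G root hT t L v) ∧ psi t (F G root hT t L v) ≤ 1/2 ∧
        (F G root hT t L v).headD 0 ∈ L v := by
  have hnil_good : Good t [] := good_nil t (fun n hn => t_pos hk hn)
  have hnil_psi : psi t [] ≤ 1/2 := by rw [psi_nil]; norm_num
  intro N
  induction N with
  | zero =>
    intro v hv
    have hvr : v = root := by
      have h0 : (thePath G root hT v).length = 0 := by
        have := hv
        rw [depth] at this
        omega
      have := SimpleGraph.Walk.eq_of_length_eq_zero h0
      exact this.symm
    subst hvr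
    rw [F, dif_pos rfl]
    have hex := extend t k hk1 hk [] hnil_good hnil_psi (L v) (hL v)
    obtain ⟨hmem, hgood, hpsi⟩ := pick_spec t [] (L v) hex
    exact ⟨hgood, hpsi, by simpa using hmem⟩
  | succ N ih =>
    intro v hv
    by_cases hvr : v = root
    · subst hvr
      rw [F, dif_pos rfl]
      have hex := extend t k hk1 hk [] hnil_good hnil_psi (L v) (hL v)
      obtain ⟨hmem, hgood, hpsi⟩ := pick_spec t [] (L v) hex
      exact ⟨hgood, hpsi, by simpa using hmem⟩
    · have hdp : depth G root hT (parent G root hT v hvr) ≤ N := by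
        have := depth_parent_lt G root hT v hvr
        omega
      obtain ⟨hpg, hpp, _⟩ := ih (parent G root hT v hvr) hdp
      have hex := extend t k hk1 hk (F G root hT t L (parent G root hT v hvr)) hpg hpp
        (L v) (hL v)
      rw [F, dif_neg hvr]
      obtain ⟨hmem, hgood, hpsi⟩ := pick_spec t _ (L v) hex
      exact ⟨hgood, hpsi, by simpa using hmem⟩

noncomputable def fcol (v : V) : ℕ := (F G root hT t L v).headD 0

lemma F_support_eq :
    ∀ (N : ℕ) (v : V), depth G root hT v ≤ N →
      F G root hT t L v
        = ((thePath G root hT v).support.map (fcol G root hT t L)).reverse := by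
  intro N
  induction N with
  | zero =>
    intro v hv
    have hvr : v = root := by
      have h0 : (thePath G root hT v).length = 0 := by
        rw [depth] at hv
        omega
      exact (SimpleGraph.Walk.eq_of_length_eq_zero h0).symm
    subst hvr
    rw [thePath_root]
    simp only [SimpleGraph.Walk.support_nil, List.map_cons, List.map_nil,
      List.reverse_cons, List.reverse_nil, List.nil_append]
    rw [fcol]
    rw [F, dif_pos rfl]
    simp
  | succ N ih =>
    intro v hv
    by_cases hvr : v = root
    · subst hvr
      rw [thePath_root]
      simp only [SimpleGraph.Walk.support_nil, List.map_cons, List.map_nil,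
        List.reverse_cons, List.reverse_nil, List.nil_append]
      rw [fcol]
      rw [F, dif_pos rfl]
      simp
    · have hdp : depth G root hT (parent G root hT v hvr) ≤ N := by
        have := depth_parent_lt G root hT v hvr
        omega
      have hIH := ih (parent G root hT v hvr) hdp
      rw [thePath_support_eq G root hT v hvr]
      rw [List.map_append, List.reverse_append]
      simp only [List.map_cons, List.map_nil, List.reverse_cons, List.reverse_nil,
        List.nil_append]
      rw [← hIH]
      have hFv : F G root hT t L v
          = pick t (F G root hT t L (parent G root hT v hvr)) (L v)
            :: F G root hT t L (parent G root hT v hvr) := by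
        rw [F, dif_neg hvr]
      rw [hFv]
      congr 1
      rw [fcol, hFv]
      simp

end Tree

lemma rev_drop_contra (t : ℕ → ℕ) (ε : ℝ) (hε : 0 < ε) (hteq : t = tfun ε)
    (W : List ℕ) (hW : Good t W) (l : List ℕ) (j : ℕ)
    (hl : l = W.reverse.drop j ∨ l.reverse = W.reverse.drop j)
    (hform : IsFormPow (1+ε) l) : False := by
  obtain ⟨n, hn1, hlen, hper⟩ := formpow_spec ε hε l hform
  cases hl with
  | inl h =>
    exact no_bad_factor t W hW j n hn1 l h (by rw [hteq]; exact hlen) hper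
  | inr h =>
    apply no_bad_factor t W hW j n hn1 l.reverse h
      (by rw [List.length_reverse, hteq]; exact hlen)
    intro i hi
    rw [List.length_reverse] at hi
    rw [List.getElem?_reverse (by omega), List.getElem?_reverse (by omega)]
    have hq := hper (l.length - 1 - i - n) (by omega)
    rw [show l.length - 1 - i - n + n = l.length - 1 - i by omega] at hq
    rw [show l.length - 1 - (i+n) = l.length - 1 - i - n by omega]
    exact hq.symm

end VertFree

/-- For every `ε > 0`, with `c = 4·⌈1/ε⌉`, every finite rooted tree admits, for any
lists of size at least `c`, a coloring chosen from the lists in which no vertical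
path has a color sequence of the form `x^{1+ε}`. -/
theorem vertically_x_one_plus_eps_free_choice_trees :
    ∀ ε : ℝ, 0 < ε →
      ∀ (V : Type) [Fintype V] (G : SimpleGraph V) (root : V),
        G.IsTree →
        ∀ L : V → Finset ℕ, (∀ v : V, 4 * ⌈1 / ε⌉₊ ≤ (L v).card) →
        ∃ f : V → ℕ, (∀ v : V, f v ∈ L v) ∧
          ∀ (u w : V) (p : G.Walk u w), IsVerticalPath G root p →
            ¬ IsFormPow (1 + ε) (p.support.map f) := by
    classical
  intro ε hε V _ G root hT L hL
  open VertFree in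
  set k := ⌈1/ε⌉₊ with hkdef
  have hk1 : 1 ≤ k := Nat.one_le_ceil_iff.mpr (by positivity)
  set t := VertFree.tfun ε with htdef
  have hkspec : ∀ n, 1 ≤ n → n ≤ k * t n := VertFree.tfun_spec ε hε
  set f := VertFree.fcol G root hT t L with hfdef
  have hinv : ∀ v : V, VertFree.Good t (VertFree.F G root hT t L v) ∧
      VertFree.psi t (VertFree.F G root hT t L v) ≤ 1/2 ∧
      (VertFree.F G root hT t L v).headD 0 ∈ L v := by
    intro v
    exact VertFree.F_invariant G root hT t L k hk1 hkspec hL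
      (VertFree.depth G root hT v) v le_rfl
  have hsupp : ∀ v : V, VertFree.F G root hT t L v
      = ((VertFree.thePath G root hT v).support.map f).reverse := by
    intro v
    exact VertFree.F_support_eq G root hT t L (VertFree.depth G root hT v) v le_rfl
  -- key decomposition: the support of a dropUntil is a drop of the branch word
  have hkey : ∀ (y z : V) (hm : z ∈ (VertFree.thePath G root hT y).support),
      ∃ j, ((VertFree.thePath G root hT y).dropUntil z hm).support.map f
        = ((VertFree.F G root hT t L y).reverse).drop j := by
    intro y z hm
    set q := VertFree.thePath G root hT y with hq
    set q1 := q.takeUntil z hm with hq1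
    set q2 := q.dropUntil z hm with hq2
    have hql : q.support = q1.support ++ q2.support.tail := by
      conv_lhs => rw [← SimpleGraph.Walk.take_spec q hm]
      exact SimpleGraph.Walk.support_append _ _
    have hq1s : ∃ tl, q1.support = tl ++ [z] := by
      have h1 : q1.reverse.support = z :: q1.reverse.support.tail :=
        SimpleGraph.Walk.support_eq_cons _
      refine ⟨q1.reverse.support.tail.reverse, ?_⟩
      have h2 : q1.support.reverse = z :: q1.reverse.support.tail := by
        rw [← SimpleGraph.Walk.support_reverse]
        exact h1
      calc q1.support = q1.support.reverse.reverse := (List.reverse_reverse _).symm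
        _ = (z :: q1.reverse.support.tail).reverse := by rw [h2]
        _ = q1.reverse.support.tail.reverse ++ [z] := by simp
    obtain ⟨tl, htl⟩ := hq1s
    have hq2s : q2.support = z :: q2.support.tail := SimpleGraph.Walk.support_eq_cons _
    have hqs : q.support = tl ++ q2.support := by
      rw [hql, htl, hq2s]
      simp
    refine ⟨(tl.map f).length, ?_⟩
    have hFrev : (VertFree.F G root hT t L y).reverse = q.support.map f := by
      rw [hsupp y, List.reverse_reverse]
    rw [hFrev, hqs, List.map_append, List.drop_left]
  refine ⟨f, ?_, ?_⟩
  · intro v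
    have h1 := (hinv v).2.2
    rw [hfdef]
    rw [VertFree.fcol]
    exact h1
  · rintro u w' p ⟨hpath, hdesc⟩ hform
    cases hdesc with
    | inr hdu =>
      -- u is an ancestor of w' : w' descendant? hdu : IsDescendant G root w' u
      have hmem : u ∈ (VertFree.thePath G root hT w').support := by
        have hrev : ((VertFree.thePath G root hT w').reverse).IsPath :=
          (VertFree.thePath_isPath G root hT w').reverse
        have := hdu (VertFree.thePath G root hT w').reverse hrev
        rwa [SimpleGraph.Walk.support_reverse, List.mem_reverse] at this
      obtain ⟨j, hj⟩ := hkey w' u hmem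
      have hq2path : ((VertFree.thePath G root hT w').dropUntil u hmem).IsPath :=
        (VertFree.thePath_isPath G root hT w').dropUntil _
      have hpeq : p = (VertFree.thePath G root hT w').dropUntil u hmem := by
        have h1 := (hT.existsUnique_path u w').choose_spec.2 p hpath
        have h2 := (hT.existsUnique_path u w').choose_spec.2 _ hq2path
        rw [h1, h2]
      apply VertFree.rev_drop_contra t ε hε htdef (VertFree.F G root hT t L w') (hinv w').1
        (p.support.map f) j _ hform
      left
      rw [hpeq, hj]
    | inl hud =>
      -- w' is an ancestor of u
      have hmem : w' ∈ (VertFree.thePath G root hT u).support := by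
        have hrev : ((VertFree.thePath G root hT u).reverse).IsPath :=
          (VertFree.thePath_isPath G root hT u).reverse
        have := hud (VertFree.thePath G root hT u).reverse hrev
        rwa [SimpleGraph.Walk.support_reverse, List.mem_reverse] at this
      obtain ⟨j, hj⟩ := hkey u w' hmem
      have hq2path : ((VertFree.thePath G root hT u).dropUntil w' hmem).IsPath :=
        (VertFree.thePath_isPath G root hT u).dropUntil _
      have hpeq : p.reverse = (VertFree.thePath G root hT u).dropUntil w' hmem := by
        have h1 := (hT.existsUnique_path w' u).choose_spec.2 p.reverse hpath.reverse
        have h2 := (hT.existsUnique_path w' u).choose_spec.2 _ hq2path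
        rw [h1, h2]
      apply VertFree.rev_drop_contra t ε hε htdef (VertFree.F G root hT t L u) (hinv u).1
        (p.support.map f) j _ hform
      right
      have hsup : p.support = ((VertFree.thePath G root hT u).dropUntil w' hmem).support.reverse := by
        have h3 := SimpleGraph.Walk.support_reverse p
        rw [hpeq] at h3
        rw [h3, List.reverse_reverse]
      rw [hsup, ← List.map_reverse, List.reverse_reverse, hj]
end

section
/- Let ε > 0, let T be a rooted tree and let f be a coloring of its vertices. If some simple path in T has a color sequence of the form x^{2+ε}, then some vertical path in T has a color sequence of the form x^{1+ε/2}. (Indeed, at least half of the vertices of the offending simple path form a vertical path whose color sequence is of the form x^{1+ε/2}.) -/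
open SimpleGraph


/-- pointwise description of a power-form list -/
lemma form_pointwise (x : List ℕ) (hx : x ≠ []) :
    ∀ (a : ℕ) (c : ℕ) (hc : c ≤ x.length) (l : List ℕ)
      (hl : l = (List.replicate a x).flatten ++ x.take c)
      (i : ℕ) (hi : i < l.length), l[i] = x[i % x.length]'(Nat.mod_lt _ (by cases x <;> simp_all)) := by
  intro a
  induction a with
  | zero =>
    intro c hc l hl i hi
    subst hl
    simp only [List.replicate_zero, List.flatten_nil, List.nil_append] at *
    have h1 : i < c := by simp at hi; omega
    have h2 : i < x.length := lt_of_lt_of_le h1 hc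
    rw [List.getElem_take]
    congr 1
    exact (Nat.mod_eq_of_lt h2).symm
  | succ a ih =>
    intro c hc l hl i hi
    have hx1 : 0 < x.length := by cases x <;> simp_all
    rw [List.replicate_succ, List.flatten_cons, List.append_assoc] at hl
    subst hl
    by_cases h : i < x.length
    · rw [List.getElem_append_left h]
      congr 1
      exact (Nat.mod_eq_of_lt h).symm
    · push_neg at h
      rw [List.getElem_append_right h]
      have hi' : i - x.length < ((List.replicate a x).flatten ++ x.take c).length := by
        simp at hi ⊢; omega
      rw [ih c hc _ rfl _ hi']
      congr 1
      conv_rhs => rw [← Nat.sub_add_cancel h]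
      rw [Nat.add_mod_right]

lemma pointwise_form (x : List ℕ) (hx : x ≠ []) (b d : ℕ) (hd : d ≤ x.length) (l : List ℕ)
    (hlen : l.length = b * x.length + d)
    (hpt : ∀ (i : ℕ) (hi : i < l.length),
      l[i] = x[i % x.length]'(Nat.mod_lt _ (by cases x <;> simp_all))) :
    l = (List.replicate b x).flatten ++ x.take d := by
  have hlen2 : ((List.replicate b x).flatten ++ x.take d).length = b * x.length + d := by
    simp [Nat.min_eq_left hd, Nat.mul_comm]
  apply List.ext_getElem (by omega)
  intro i h1 h2
  rw [hpt i h1, form_pointwise x hx b d hd _ rfl i h2]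

lemma rot_pointwise (x : List ℕ) (hx : x ≠ []) (k : ℕ) (hk : k < x.length)
    (j : ℕ) (hj : j < x.length) :
    (x.drop k ++ x.take k)[j]'(by simp; omega) =
      x[(k + j) % x.length]'(Nat.mod_lt _ (by cases x <;> simp_all)) := by
  have hn : 0 < x.length := by cases x <;> simp_all
  by_cases h : j < x.length - k
  · rw [List.getElem_append_left (by simpa using h)]
    rw [List.getElem_drop]
    congr 1
    exact (Nat.mod_eq_of_lt (by omega)).symm
  · push_neg at h
    rw [List.getElem_append_right (by simpa using h)]
    rw [List.getElem_take]
    congr 1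
    have : (k + j) % x.length = k + j - x.length := by
      rw [Nat.mod_eq_sub_mod (by omega), Nat.mod_eq_of_lt (by omega)]
    simp [this]
    omega

lemma arith_main (ε : ℝ) (hε : 0 < ε) (n : ℕ) (hn : 1 ≤ n) :
    1 ≤ ⌊(1+ε/2)⌋₊ ∧ ⌈Int.fract (1+ε/2) * n⌉₊ ≤ n ∧ ⌈Int.fract (2+ε) * n⌉₊ ≤ n ∧
    2*(⌊(1+ε/2)⌋₊*n + ⌈Int.fract (1+ε/2)*n⌉₊) ≤ ⌊(2+ε)⌋₊*n + ⌈Int.fract (2+ε)*n⌉₊ + 2 ∧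
    ⌊(1+ε/2)⌋₊*n + ⌈Int.fract (1+ε/2)*n⌉₊ ≤ ⌊(2+ε)⌋₊*n + ⌈Int.fract (2+ε)*n⌉₊ := by
  set r1 : ℝ := 1 + ε/2 with hr1
  set r2 : ℝ := 2 + ε with hr2
  have hr1pos : (0:ℝ) ≤ r1 := by rw [hr1]; linarith
  have hr2pos : (0:ℝ) ≤ r2 := by rw [hr2]; linarith
  have hnR : (1:ℝ) ≤ (n:ℝ) := by exact_mod_cast hn
  have hB1 : 1 ≤ ⌊r1⌋₊ := Nat.le_floor (by rw [hr1]; push_cast; linarith)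
  have hf1 : 0 ≤ Int.fract r1 := Int.fract_nonneg r1
  have hf1' : Int.fract r1 < 1 := Int.fract_lt_one r1
  have hf2 : 0 ≤ Int.fract r2 := Int.fract_nonneg r2
  have hf2' : Int.fract r2 < 1 := Int.fract_lt_one r2
  have hD : ⌈Int.fract r1 * n⌉₊ ≤ n := Nat.ceil_le.mpr (by nlinarith)
  have hC : ⌈Int.fract r2 * n⌉₊ ≤ n := Nat.ceil_le.mpr (by nlinarith)
  have hBr : (⌊r1⌋₊ : ℝ) = r1 - Int.fract r1 := by
    rw [Int.fract]
    have := Int.natCast_floor_eq_floor hr1pos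
    push_cast [← this]
    ring
  have hAr : (⌊r2⌋₊ : ℝ) = r2 - Int.fract r2 := by
    rw [Int.fract]
    have := Int.natCast_floor_eq_floor hr2pos
    push_cast [← this]
    ring
  have hMlt : ((⌊r1⌋₊*n + ⌈Int.fract r1 * n⌉₊ : ℕ) : ℝ) < r1 * n + 1 := by
    push_cast
    have h1 : (⌈Int.fract r1 * n⌉₊ : ℝ) < Int.fract r1 * n + 1 :=
      Nat.ceil_lt_add_one (by positivity)
    rw [hBr]; nlinarith
  have hLge : r2 * n ≤ ((⌊r2⌋₊*n + ⌈Int.fract r2 * n⌉₊ : ℕ) : ℝ) := by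
    push_cast
    have h1 : Int.fract r2 * n ≤ (⌈Int.fract r2 * n⌉₊ : ℝ) := Nat.le_ceil _
    rw [hAr]; nlinarith
  have key1 : 2*(⌊r1⌋₊*n + ⌈Int.fract r1*n⌉₊) ≤ ⌊r2⌋₊*n + ⌈Int.fract r2*n⌉₊ + 2 := by
    have : ((2*(⌊r1⌋₊*n + ⌈Int.fract r1*n⌉₊) : ℕ) : ℝ) <
        ((⌊r2⌋₊*n + ⌈Int.fract r2*n⌉₊ + 2 : ℕ) : ℝ) := by
      push_cast at hMlt hLge ⊢
      have : 2 * r1 * n = r2 * n := by rw [hr1, hr2]; ring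
      nlinarith
    exact_mod_cast this.le
  have key2 : ⌊r1⌋₊*n + ⌈Int.fract r1*n⌉₊ ≤ ⌊r2⌋₊*n + ⌈Int.fract r2*n⌉₊ := by
    have : ((⌊r1⌋₊*n + ⌈Int.fract r1*n⌉₊ : ℕ) : ℝ) <
        ((⌊r2⌋₊*n + ⌈Int.fract r2*n⌉₊ : ℕ) : ℝ) := by
      have h1 : r1 * n + 1 ≤ r2 * n := by
        rw [hr1, hr2]
        have h0 : (0:ℝ) ≤ ε * n := by positivity
        nlinarith
      linarith
    exact_mod_cast this.le
  exact ⟨hB1, hD, hC, key1, key2⟩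

open SimpleGraph

lemma isPath_append_disj {V : Type} {G : SimpleGraph V} {u v w : V}
    {p : G.Walk u v} {q : G.Walk v w} (hp : p.IsPath) (hq : q.IsPath)
    (hd : ∀ z, z ∈ p.support → z ∈ q.support → z = v) : (p.append q).IsPath := by
  rw [Walk.isPath_def, Walk.support_append]
  refine List.Nodup.append hp.support_nodup hq.support_nodup.tail ?_
  intro z hz1 hz2
  have hz3 : z ∈ q.support := List.mem_of_mem_tail hz2
  have hzv := hd z hz1 hz3
  subst hzv
  have hc : q.support = z :: q.support.tail := q.support_eq_cons
  have hnd := hq.support_nodup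
  rw [hc] at hnd
  exact (List.nodup_cons.1 hnd).1 hz2

lemma walk_split {V : Type} {G : SimpleGraph V} :
    ∀ (m : ℕ) {u w : V} (p : G.Walk u w) (hm : m < p.support.length),
    ∃ (v : V) (q : G.Walk u v) (r : G.Walk v w), p = q.append r ∧
      q.support = p.support.take (m+1) ∧ r.support = p.support.drop m ∧
      v = p.support[m]'hm := by
  intro m
  induction m with
  | zero =>
    intro u w p hm
    refine ⟨u, Walk.nil, p, by rw [Walk.nil_append], ?_, by simp, ?_⟩
    · conv_rhs => rw [p.support_eq_cons]
      rfl
    · rw [List.getElem_zero, Walk.head_support]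
  | succ m ih =>
    intro u w p hm
    cases p with
    | nil => simp [Walk.support_nil] at hm
    | @cons _ v' _ h p' =>
      have hm' : m < p'.support.length := by
        simp only [Walk.support_cons, List.length_cons] at hm; omega
      obtain ⟨v, q', r, h1, h2, h3, h4⟩ := ih p' hm'
      refine ⟨v, Walk.cons h q', r, ?_, ?_, ?_, ?_⟩
      · rw [Walk.cons_append, ← h1]
      · rw [Walk.support_cons, h2, Walk.support_cons, List.take_succ_cons]
      · rw [h3, Walk.support_cons, List.drop_succ_cons]
      · rw [h4]
        simp [Walk.support_cons]

lemma getElem_idx {α} (l : List α) (i j : ℕ) (hij : i = j) (hj : j < l.length) :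
    l[i]'(hij ▸ hj) = l[j] := by subst hij; rfl

lemma getElem_mem_take {α} (l : List α) (i j : ℕ) (h : i < j) (h2 : i < l.length) :
    l[i] ∈ l.take j := by
  have h3 : i < (l.take j).length := by simp; omega
  have h4 : (l.take j)[i]'h3 = l[i] := List.getElem_take ..
  exact h4 ▸ List.getElem_mem h3

lemma getElem_mem_drop {α} (l : List α) (i j : ℕ) (h : j ≤ i) (h2 : i < l.length) :
    l[i] ∈ l.drop j := by
  have h3 : i - j < (l.drop j).length := by simp; omega
  have h4 : (l.drop j)[i-j]'h3 = l[j + (i-j)] := List.getElem_drop ..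
  have h5 : l[j + (i-j)]'(by omega) = l[i] := getElem_idx l _ _ (by omega) h2
  exact (h4.trans h5) ▸ List.getElem_mem h3

/-- If, in a rooted tree, some simple path has a color sequence of the form
`x^{2+ε}`, then some vertical path has a color sequence of the form `x^{1+ε/2}`. -/
theorem vertical_path_from_x_two_plus_eps
    (ε : ℝ) (hε : 0 < ε)
    (V : Type) [Fintype V] (G : SimpleGraph V) (root : V)
    (hT : G.IsTree) (f : V → ℕ)
    (h : ∃ (u w : V) (p : G.Walk u w), p.IsPath ∧
      IsFormPow (2 + ε) (p.support.map f)) :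
    ∃ (u w : V) (q : G.Walk u w), IsVerticalPath G root q ∧
      IsFormPow (1 + ε / 2) (q.support.map f) := by
  classical
  obtain ⟨u, w, p, hp, x, hx, hform⟩ := h
  set n := x.length with hn_def
  have hn : 1 ≤ n := List.length_pos_iff.2 hx
  obtain ⟨hB1, hD, hC, hkey1, hkey2⟩ := arith_main ε hε n hn
  set A := ⌊(2+ε:ℝ)⌋₊ with hA_def
  set C := ⌈Int.fract (2+ε) * (n:ℝ)⌉₊ with hC_def
  set B := ⌊(1+ε/2:ℝ)⌋₊ with hB_def
  set D := ⌈Int.fract (1+ε/2) * (n:ℝ)⌉₊ with hD_def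
  set s := p.support.map f with hs_def
  set S := p.support.length with hS_def
  have hsS : s.length = S := by rw [hs_def, List.length_map]
  have hLs : S = A * n + C := by
    rw [← hsS, hform]
    simp [Nat.min_eq_left hC, Nat.mul_comm]
    rw [← hn_def, Nat.min_eq_left hC]
  set M := B * n + D with hM_def
  have hMS : M ≤ S := by omega
  have hM1 : 1 ≤ M := by
    have : 1 * 1 ≤ B * n := Nat.mul_le_mul hB1 hn
    omega
  have hS1 : 1 ≤ S := le_trans hM1 hMS
  -- pointwise description of s
  have hpt : ∀ (i : ℕ) (hi : i < s.length),
      s[i] = x[i % n]'(Nat.mod_lt _ (by omega)) := by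
    intro i hi
    exact form_pointwise x hx A C hC s hform i hi
  -- the minimal vertex t
  have hsupne : p.support ≠ [] := p.support_ne_nil
  obtain ⟨t, ht, hmin⟩ : ∃ a ∈ p.support, ∀ b ∈ p.support, G.dist a root ≤ G.dist b root := by
    obtain ⟨a, ha, hm⟩ := p.support.toFinset.exists_min_image (fun z => G.dist z root)
      (by simpa using hsupne)
    exact ⟨a, by simpa using ha, fun b hb => hm b (by simpa using hb)⟩
  set k := p.support.idxOf t with hk_def
  have hkS : k < S := List.idxOf_lt_length_iff.2 ht
  have hkt : p.support[k]'hkS = t := List.getElem_idxOf hkS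
  -- shortest path from t to root
  obtain ⟨Q, hQlen⟩ := hT.isConnected.exists_walk_length_eq_dist t root
  set PT := Q.bypass with hPT_def
  have hPTpath : PT.IsPath := Q.bypass_isPath
  have hPTlen : PT.length = G.dist t root :=
    le_antisymm (hQlen ▸ Q.length_bypass_le) (SimpleGraph.dist_le _)
  -- every vertex of PT other than t has strictly smaller distance to root
  have hless : ∀ z ∈ PT.support, z ≠ t → G.dist z root < G.dist t root := by
    intro z hz hzt
    have hspec := PT.take_spec hz
    have hlen : (PT.takeUntil z hz).length + (PT.dropUntil z hz).length = PT.length := by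
      have := congrArg Walk.length hspec
      rwa [Walk.length_append] at this
    have h1 : G.dist z root ≤ (PT.dropUntil z hz).length := SimpleGraph.dist_le _
    have h2 : (PT.takeUntil z hz).length ≠ 0 := by
      intro h0
      exact hzt ((PT.takeUntil z hz).eq_of_length_eq_zero h0).symm
    omega
  -- disjointness of any subset of p.support with PT.support
  have hdisj : ∀ z, z ∈ p.support → z ∈ PT.support → z = t := by
    intro z hz1 hz2
    by_contra hzt
    exact absurd (hmin z hz1) (Nat.not_le.2 (hless z hz2 hzt))
  -- split p at index k
  obtain ⟨t', qt, rt, hsp, hqt, hrt, ht'⟩ := walk_split k p (by omega)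
  have ht't : t' = t := by rw [ht', hkt]
  subst ht't
  have hqt_path : qt.IsPath := (hsp ▸ hp).of_append_left
  have hrt_path : rt.IsPath := Walk.IsPath.of_append_right (hsp ▸ hp)
  -- the unique path from u to root
  have hWu_path : (qt.append PT).IsPath := by
    refine isPath_append_disj hqt_path hPTpath ?_
    intro z hz1 hz2
    exact hdisj z (by rw [hqt] at hz1; exact List.mem_of_mem_take hz1) hz2
  have hWw_path : (rt.reverse.append PT).IsPath := by
    refine isPath_append_disj hrt_path.reverse hPTpath ?_
    intro z hz1 hz2
    rw [Walk.support_reverse, List.mem_reverse] at hz1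
    exact hdisj z (by rw [hrt] at hz1; exact List.mem_of_mem_drop hz1) hz2
  have huniq_u : ∀ (p' : G.Walk u root), p'.IsPath → p' = qt.append PT := by
    intro p' hp'
    have := hT.IsAcyclic.path_unique ⟨p', hp'⟩ ⟨qt.append PT, hWu_path⟩
    exact congrArg Subtype.val this
  have huniq_w : ∀ (p' : G.Walk w root), p'.IsPath → p' = rt.reverse.append PT := by
    intro p' hp'
    have := hT.IsAcyclic.path_unique ⟨p', hp'⟩ ⟨rt.reverse.append PT, hWw_path⟩
    exact congrArg Subtype.val this
  by_cases hcase : M ≤ k + 1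
  · -- prefix case
    obtain ⟨v, q, r, hsp2, hq2, hr2, hv2⟩ := walk_split (M-1) p (by omega)
    have hq_path : q.IsPath := (hsp2 ▸ hp).of_append_left
    refine ⟨u, v, q, ⟨hq_path, Or.inl ?_⟩, ?_⟩
    · -- u is a descendant of v
      intro p' hp'
      rw [huniq_u p' hp', Walk.support_append]
      apply List.mem_append_left
      rw [hqt, hv2]
      exact getElem_mem_take p.support (M-1) (k+1) (by omega) (by omega)
    · -- color sequence
      have hqs : q.support.map f = s.take M := by
        rw [hq2, hs_def, List.map_take]
        congr 1
        omega
      rw [hqs]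
      refine ⟨x, hx, ?_⟩
      have hlen : (s.take M).length = M := by rw [List.length_take]; omega
      refine pointwise_form x hx B D hD _ (by rw [hlen]) ?_
      intro i hi
      rw [hlen] at hi
      have hi' : i < s.length := by omega
      have : (s.take M)[i]'(by omega) = s[i] := List.getElem_take ..
      rw [this, hpt i hi']
  · -- suffix case
    set m := S - M with hm_def
    have hkm : k ≤ m := by omega
    obtain ⟨v, q, r, hsp2, hq2, hr2, hv2⟩ := walk_split m p (by omega)
    have hr_path : r.IsPath := Walk.IsPath.of_append_right (hsp2 ▸ hp)
    refine ⟨v, w, r, ⟨hr_path, Or.inr ?_⟩, ?_⟩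
    · -- w is a descendant of v
      intro p' hp'
      rw [huniq_w p' hp', Walk.support_append]
      apply List.mem_append_left
      rw [Walk.support_reverse, List.mem_reverse, hrt, hv2]
      exact getElem_mem_drop p.support m k (by omega) (by omega)
    · -- color sequence
      have hrs : r.support.map f = s.drop m := by
        rw [hr2, hs_def, List.map_drop]
      rw [hrs]
      have hk0 : m % n < n := Nat.mod_lt _ (by omega)
      have hyn : (x.drop (m % n) ++ x.take (m % n)).length = n := by
        rw [List.length_append, List.length_drop, List.length_take]
        omega
      have hyne : (x.drop (m % n) ++ x.take (m % n)) ≠ [] := by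
        intro h0
        rw [h0] at hyn
        simp at hyn
        omega
      refine ⟨_, hyne, ?_⟩
      have hlen : (s.drop m).length = M := by rw [List.length_drop]; omega
      rw [hyn]
      refine pointwise_form _ hyne B D (by omega) _ (by rw [hlen, hyn]) ?_
      intro i hi
      have hi' : i < M := by rw [hlen] at hi; exact hi
      have hmi : m + i < s.length := by omega
      have h3 : (m + i) % n = (m % n + i % n) % n := Nat.add_mod m i n
      calc (s.drop m)[i]'hi = s[m+i]'hmi := List.getElem_drop ..
        _ = x[(m+i) % n]'(Nat.mod_lt _ (by omega)) := hpt (m+i) hmi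
        _ = x[(m % n + i % n) % x.length]'(Nat.mod_lt _ (by omega)) :=
            getElem_idx x _ _ h3 (Nat.mod_lt _ (by omega))
        _ = (x.drop (m % n) ++ x.take (m % n))[i % n]'(by rw [hyn]; exact Nat.mod_lt _ (by omega)) :=
            (rot_pointwise x hx (m % n) hk0 (i % n) (Nat.mod_lt _ (by omega))).symm
        _ = (x.drop (m % n) ++ x.take (m % n))[i % (x.drop (m % n) ++ x.take (m % n)).length]'(by rw [hyn]; exact Nat.mod_lt _ (by omega)) :=
            getElem_idx _ _ _ (by rw [hyn]) (by rw [hyn]; exact Nat.mod_lt _ (by omega))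
end
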